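/- arXiv:2401.15416 — 9 statements merged into one kernel-verified Lean document; each statement's English description precedes it below -/
import Mathlib

section
/- For every integer p, the integral ∫₀^π sin(p·t)·cot(t/2) dt equals π·sgn(p), where sgn(p) is 1 if p > 0, 0 if p = 0, and −1 if p < 0. -/
open Real intervalIntegral MeasureTheory

lemma aux (n : ℕ) (x : ℝ) :
    Real.sin ((n+1) * (2*x)) * Real.cos x
      = (1 + Real.cos ((n+1)*(2*x)) + 2 * ∑ k ∈ Finset.range n, Real.cos ((k+1)*(2*x))) * Real.sin x := by
  induction n with
  | zero =>
    simp [Real.sin_two_mul, Real.cos_two_mul]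
    nlinarith [Real.sin_sq_add_cos_sq x]
  | succ n ih =>
    have h1 : ((n:ℝ)+1+1) * (2*x) = (n+1)*(2*x) + 2*x := by ring
    rw [Finset.sum_range_succ]
    push_cast
    rw [h1, Real.sin_add, Real.cos_add, Real.sin_two_mul, Real.cos_two_mul]
    linear_combination (2*(Real.cos x)^2 - 1 + 2*(Real.sin x)^2) * ih + 2 * Real.sin x * (1 + Real.cos (((n:ℝ)+1)*(2*x)) + 2 * ∑ k ∈ Finset.range n, Real.cos (((k:ℝ)+1)*(2*x))) * (Real.sin_sq_add_cos_sq x)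

lemma cos_integral (c : ℝ) (hc : c ≠ 0) :
    ∫ t in (0:ℝ)..π, Real.cos (c*t) = Real.sin (c*π) / c := by
  have := intervalIntegral.integral_comp_mul_left (fun x => Real.cos x) hc (a := 0) (b := π)
  simp at this
  rw [this, inv_mul_eq_div]

lemma pos_case (n : ℕ) :
    ∫ t in (0:ℝ)..π, Real.sin ((n+1) * t) * (Real.cos (t / 2) / Real.sin (t / 2)) = π := by
  have hcong : ∫ t in (0:ℝ)..π, Real.sin ((n+1) * t) * (Real.cos (t / 2) / Real.sin (t / 2))
      = ∫ t in (0:ℝ)..π, (1 + Real.cos ((n+1)*t) + 2 * ∑ k ∈ Finset.range n, Real.cos ((k+1)*t)) := by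
    rw [intervalIntegral.integral_of_le Real.pi_pos.le,
        intervalIntegral.integral_of_le Real.pi_pos.le]
    apply MeasureTheory.setIntegral_congr_fun measurableSet_Ioc
    intro t ht
    have hs : Real.sin (t/2) ≠ 0 := by
      apply ne_of_gt
      apply Real.sin_pos_of_pos_of_lt_pi (by linarith [ht.1])
      linarith [ht.2, Real.pi_pos]
    have h2 : (2:ℝ) * (t/2) = t := by ring
    have := aux n (t/2)
    rw [h2] at this
    field_simp
    have e : ∑ x ∈ Finset.range n, Real.cos (t * ((x:ℝ) + 1)) = ∑ k ∈ Finset.range n, Real.cos (((k:ℝ) + 1) * t) :=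
      Finset.sum_congr rfl (fun k _ => by rw [mul_comm])
    rw [e]
    linear_combination this
  rw [hcong]
  have hi1 : IntervalIntegrable (fun _ : ℝ => (1:ℝ)) volume 0 π := by
    exact intervalIntegrable_const
  have hi2 : IntervalIntegrable (fun t : ℝ => Real.cos ((n+1)*t)) volume 0 π :=
    (Real.continuous_cos.comp (continuous_const.mul continuous_id)).intervalIntegrable 0 π
  have hi3 : IntervalIntegrable (fun t : ℝ => 2 * ∑ k ∈ Finset.range n, Real.cos ((k+1)*t)) volume 0 π := by
    apply Continuous.intervalIntegrable
    exact continuous_const.mul (continuous_finset_sum _ fun k _ =>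
      Real.continuous_cos.comp (continuous_const.mul continuous_id))
  rw [intervalIntegral.integral_add (hi1.add hi2) hi3, intervalIntegral.integral_add hi1 hi2]
  have e1 : ∫ _ in (0:ℝ)..π, (1:ℝ) = π := by simp
  have e2 : ∫ t in (0:ℝ)..π, Real.cos ((n+1)*t) = 0 := by
    rw [cos_integral _ (by positivity)]
    have : ((n:ℝ)+1)*π = ((n+1 : ℕ):ℝ) * π := by push_cast; ring
    rw [this, Real.sin_nat_mul_pi, zero_div]
  have e3 : ∫ t in (0:ℝ)..π, (2 * ∑ k ∈ Finset.range n, Real.cos ((k+1)*t)) = 0 := by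
    rw [intervalIntegral.integral_const_mul, intervalIntegral.integral_finset_sum (μ := volume) (s := Finset.range n)
      (f := fun (k : ℕ) (t : ℝ) => Real.cos (((k:ℝ)+1)*t))
      (fun k _ => ((by fun_prop : Continuous fun t : ℝ => Real.cos (((k:ℝ)+1)*t))).intervalIntegrable 0 π)]
    have : ∀ k ∈ Finset.range n, ∫ t in (0:ℝ)..π, Real.cos (((k:ℝ)+1)*t) = 0 := by
      intro k _
      rw [cos_integral _ (by positivity)]
      have : ((k:ℝ)+1)*π = ((k+1 : ℕ):ℝ) * π := by push_cast; ring
      rw [this, Real.sin_nat_mul_pi, zero_div]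
    rw [Finset.sum_congr rfl this]
    simp
  rw [e1, e2, e3]; ring

/-- For every integer `p`, `∫ t in 0..π, sin (p t) * cot (t/2) dt = π * sgn p`. -/
theorem integral_sin_int_mul_cot_half (p : ℤ) :
    ∫ t in (0 : ℝ)..Real.pi,
      Real.sin (p * t) * (Real.cos (t / 2) / Real.sin (t / 2))
    = Real.pi * (Int.sign p : ℝ) := by
  rcases lt_trichotomy p 0 with hp | hp | hp
  · obtain ⟨n, hn⟩ : ∃ n : ℕ, p = -((n:ℤ)+1) := ⟨(-p-1).toNat, by omega⟩
    subst hn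
    have : ∀ t : ℝ, Real.sin ((-((n:ℤ)+1) : ℤ) * t) * (Real.cos (t / 2) / Real.sin (t / 2))
        = -(Real.sin (((n:ℝ)+1) * t) * (Real.cos (t / 2) / Real.sin (t / 2))) := by
      intro t
      push_cast
      rw [show (-((n:ℝ)+1)) * t = -(((n:ℝ)+1)*t) by ring, Real.sin_neg]
      ring
    simp only [this]
    rw [intervalIntegral.integral_neg, pos_case n]
    rw [show (-((n:ℤ) + 1)).sign = -1 from Int.sign_eq_neg_one_iff_neg.mpr (by omega)]
    push_cast; ring
  · subst hp; simp
  · obtain ⟨n, hn⟩ : ∃ n : ℕ, p = (n:ℤ)+1 := ⟨(p-1).toNat, by omega⟩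
    subst hn
    have : ∀ t : ℝ, Real.sin (((n:ℤ)+1 : ℤ) * t) * (Real.cos (t / 2) / Real.sin (t / 2))
        = Real.sin (((n:ℝ)+1) * t) * (Real.cos (t / 2) / Real.sin (t / 2)) := by
      intro t; push_cast; ring_nf
    simp only [this]
    rw [pos_case n]
    simp [Int.sign_eq_one_iff_pos.mpr (by omega : (0:ℤ) < (n:ℤ)+1)]
end

section
/- For every integer p and every real t, the principal value limit lim_{ε→0⁺} (1/2π) ∫_{ε ≤ |u| ≤ π} e^{i p (t−u)} · cot(u/2) du exists and equals −i · sgn(p) · e^{i p t}, where sgn(p) is 1 if p > 0, 0 if p = 0, and −1 if p < 0. -/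
open MeasureTheory

noncomputable def hfun (m : ℕ) (u : ℝ) : ℝ :=
  1 + Real.cos ((m + 1) * u) + 2 * ∑ k ∈ Finset.range m, Real.cos ((k + 1) * u)

lemma hfun_continuous (m : ℕ) : Continuous (hfun m) := by
  unfold hfun
  continuity

lemma sinmul_cot (n : ℕ) (u : ℝ) (hs : Real.sin (u/2) ≠ 0) :
    Real.sin ((n+1) * u) * (Real.cos (u/2) / Real.sin (u/2)) = hfun n u := by
  have pyth : Real.sin (u/2)^2 + Real.cos (u/2)^2 = 1 := Real.sin_sq_add_cos_sq _
  have hsu : Real.sin u = 2 * Real.sin (u/2) * Real.cos (u/2) := by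
    have := Real.sin_two_mul (u/2); rwa [show 2*(u/2) = u by ring] at this
  have hcu : Real.cos u = 1 - 2 * Real.sin (u/2)^2 := by
    have := Real.cos_two_mul (u/2); rw [show 2*(u/2) = u by ring] at this
    nlinarith [pyth]
  unfold hfun
  induction n with
  | zero =>
      simp only [Finset.range_zero, Finset.sum_empty, mul_zero, add_zero]
      field_simp
      rw [Nat.cast_zero, zero_add, one_mul, hsu, hcu]
      linear_combination 2*Real.sin (u/2)*pyth
  | succ n ih =>
      rw [Finset.sum_range_succ]
      have h1 : ((n:ℝ)+1+1) * u = ((n:ℝ)+1)*u + u := by ring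
      push_cast
      rw [h1, Real.sin_add, Real.cos_add]
      push_cast at ih
      field_simp at ih ⊢
      rw [hsu, hcu]
      linear_combination ih + 2*Real.sin (u/2)*Real.cos (((n:ℝ)+1)*u)*pyth

lemma sin_int_mul_cot (p : ℤ) (u : ℝ) (hs : Real.sin (u/2) ≠ 0) :
    Real.sin ((p:ℝ) * u) * (Real.cos (u/2) / Real.sin (u/2)) =
      (p.sign : ℝ) * hfun (p.natAbs - 1) u := by
  rcases lt_trichotomy p 0 with hp | hp | hp
  · have h1 : ((p.natAbs - 1 : ℕ) : ℝ) + 1 = (p.natAbs : ℝ) := by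
      have : 1 ≤ p.natAbs := by omega
      push_cast [this]
      ring
    have h2 : (p : ℝ) = -((p.natAbs : ℕ) : ℝ) := by
      rw [Nat.cast_natAbs]
      exact_mod_cast (show p = -|p| by rw [abs_of_nonpos hp.le]; ring)
    have hsign : (p.sign : ℝ) = -1 := by
      rw [Int.sign_eq_neg_one_of_neg hp]; norm_num
    rw [h2, hsign]
    have := sinmul_cot (p.natAbs - 1) u hs
    rw [h1] at this
    rw [neg_mul, Real.sin_neg]
    linarith [this]
  · subst hp; simp
  · have h1 : ((p.natAbs - 1 : ℕ) : ℝ) + 1 = (p.natAbs : ℝ) := by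
      have : 1 ≤ p.natAbs := by omega
      push_cast [this]
      ring
    have h2 : (p : ℝ) = ((p.natAbs : ℕ) : ℝ) := by
      rw [Nat.cast_natAbs]
      exact_mod_cast (show p = |p| by rw [abs_of_nonneg hp.le])
    have hsign : (p.sign : ℝ) = 1 := by
      rw [Int.sign_eq_one_of_pos hp]; norm_num
    rw [h2, hsign, one_mul]
    have := sinmul_cot (p.natAbs - 1) u hs
    rw [h1] at this
    exact this

lemma hfun_integral (m : ℕ) : ∫ u in (0:ℝ)..Real.pi, hfun m u = Real.pi := by
  have hk : ∀ k : ℕ, ∫ u in (0:ℝ)..Real.pi, Real.cos (((k:ℝ)+1)*u) = 0 := by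
    intro k
    have hc : ((k:ℝ)+1) ≠ 0 := by positivity
    rw [intervalIntegral.integral_comp_mul_left Real.cos hc]
    rw [integral_cos]
    rw [show ((k:ℝ)+1) * Real.pi = ((k+1 : ℕ) : ℝ) * Real.pi by push_cast; ring]
    rw [Real.sin_nat_mul_pi]
    simp
  unfold hfun
  have i1 : IntervalIntegrable (fun _ : ℝ => (1:ℝ)) volume 0 Real.pi :=
    continuous_const.intervalIntegrable _ _
  have i2 : IntervalIntegrable (fun u : ℝ => Real.cos (((m:ℝ)+1)*u)) volume 0 Real.pi := by
    apply Continuous.intervalIntegrable; continuity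
  have i3 : IntervalIntegrable
      (fun u : ℝ => 2 * ∑ k ∈ Finset.range m, Real.cos (((k:ℝ)+1)*u)) volume 0 Real.pi := by
    apply Continuous.intervalIntegrable
    apply continuous_const.mul
    apply continuous_finset_sum
    intro k _; continuity
  rw [intervalIntegral.integral_add (i1.add i2) i3, intervalIntegral.integral_add i1 i2]
  rw [intervalIntegral.integral_const_mul, intervalIntegral.integral_finset_sum]
  · rw [hk m, Finset.sum_eq_zero (fun k _ => hk k)]
    simp
  · intro k _
    apply Continuous.intervalIntegrable; continuity

lemma hfun_tendsto (m : ℕ) :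
    Filter.Tendsto (fun ε : ℝ => ∫ u in ε..Real.pi, hfun m u)
      (nhdsWithin (0:ℝ) (Set.Ioi 0)) (nhds Real.pi) := by
  have hcont : Continuous (fun x : ℝ => ∫ u in x..Real.pi, hfun m u) := by
    have h1 : Continuous (fun x : ℝ => ∫ u in Real.pi..x, hfun m u) :=
      intervalIntegral.continuous_primitive
        (fun a b => (hfun_continuous m).intervalIntegrable a b) Real.pi
    have h2 : (fun x : ℝ => ∫ u in x..Real.pi, hfun m u)
        = fun x : ℝ => -∫ u in Real.pi..x, hfun m u := by
      funext x; rw [intervalIntegral.integral_symm]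
    rw [h2]; exact h1.neg
  have h3 := ((hcont.tendsto 0).mono_left nhdsWithin_le_nhds :
    Filter.Tendsto _ (nhdsWithin (0:ℝ) (Set.Ioi 0)) _)
  rwa [hfun_integral m] at h3

lemma pointwise_sum (p : ℤ) (t u : ℝ) (hs : Real.sin (u/2) ≠ 0) :
    Complex.exp (Complex.I * p * ((t:ℂ) - (u:ℝ))) *
        ((Real.cos (u / 2) / Real.sin (u / 2) : ℝ) : ℂ) +
      Complex.exp (Complex.I * p * ((t:ℂ) - ((-u : ℝ):ℂ))) *
        ((Real.cos ((-u) / 2) / Real.sin ((-u) / 2) : ℝ) : ℂ)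
    = (-2 * Complex.I * (p.sign : ℂ) * Complex.exp (Complex.I * p * t)) *
        ((hfun (p.natAbs - 1) u : ℝ) : ℂ) := by
  have key : Complex.exp (Complex.I*(p:ℂ)*((t:ℂ)-(u:ℂ))) - Complex.exp (Complex.I*(p:ℂ)*((t:ℂ)+(u:ℂ)))
      = -2*Complex.I*Complex.exp (Complex.I*(p:ℂ)*(t:ℂ)) * ((Real.sin ((p:ℝ)*u) : ℝ) : ℂ) := by
    have e1 : Complex.I*(p:ℂ)*((t:ℂ)-(u:ℂ)) = Complex.I*(p:ℂ)*(t:ℂ) + (-((p:ℂ)*(u:ℂ))*Complex.I) := by ring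
    have e2 : Complex.I*(p:ℂ)*((t:ℂ)+(u:ℂ)) = Complex.I*(p:ℂ)*(t:ℂ) + (((p:ℂ)*(u:ℂ))*Complex.I) := by ring
    rw [e1, e2, Complex.exp_add, Complex.exp_add, ← mul_sub]
    have hsin : ((Real.sin ((p:ℝ)*u) : ℝ) : ℂ) = Complex.sin ((p:ℂ)*(u:ℂ)) := by
      rw [Complex.ofReal_sin]
      norm_cast
    rw [hsin, Complex.sin]
    ring_nf
    simp only [Complex.I_sq]
    ring
  have hneg : ((Real.cos ((-u) / 2) / Real.sin ((-u) / 2) : ℝ) : ℂ)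
      = -((Real.cos (u / 2) / Real.sin (u / 2) : ℝ) : ℂ) := by
    rw [show (-u)/2 = -(u/2) by ring, Real.cos_neg, Real.sin_neg, div_neg]
    push_cast
    ring
  rw [hneg]
  have harg : ((t:ℂ) - ((-u : ℝ):ℂ)) = ((t:ℂ) + (u:ℂ)) := by push_cast; ring
  rw [harg]
  have lhs_eq : Complex.exp (Complex.I * p * ((t:ℂ) - (u:ℝ))) *
        ((Real.cos (u / 2) / Real.sin (u / 2) : ℝ) : ℂ) +
      Complex.exp (Complex.I * p * ((t:ℂ) + (u:ℂ))) *
        -((Real.cos (u / 2) / Real.sin (u / 2) : ℝ) : ℂ)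
      = (Complex.exp (Complex.I*(p:ℂ)*((t:ℂ)-(u:ℂ))) - Complex.exp (Complex.I*(p:ℂ)*((t:ℂ)+(u:ℂ))))
        * ((Real.cos (u / 2) / Real.sin (u / 2) : ℝ) : ℂ) := by ring
  rw [lhs_eq, key]
  have hreal := sin_int_mul_cot p u hs
  have : ((Real.sin ((p:ℝ)*u) : ℝ) : ℂ) * ((Real.cos (u / 2) / Real.sin (u / 2) : ℝ) : ℂ)
      = ((p.sign : ℝ) : ℂ) * ((hfun (p.natAbs - 1) u : ℝ) : ℂ) := by
    rw [← Complex.ofReal_mul, hreal]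
    push_cast
    ring
  calc -2*Complex.I*Complex.exp (Complex.I*(p:ℂ)*(t:ℂ)) * ((Real.sin ((p:ℝ)*u) : ℝ) : ℂ)
        * ((Real.cos (u / 2) / Real.sin (u / 2) : ℝ) : ℂ)
      = -2*Complex.I*Complex.exp (Complex.I*(p:ℂ)*(t:ℂ)) *
          (((Real.sin ((p:ℝ)*u) : ℝ) : ℂ) * ((Real.cos (u / 2) / Real.sin (u / 2) : ℝ) : ℂ)) := by
        ring
    _ = -2*Complex.I*Complex.exp (Complex.I*(p:ℂ)*(t:ℂ)) *
          (((p.sign : ℝ) : ℂ) * ((hfun (p.natAbs - 1) u : ℝ) : ℂ)) := by rw [this]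
    _ = (-2 * Complex.I * (p.sign : ℂ) * Complex.exp (Complex.I * p * t)) *
        ((hfun (p.natAbs - 1) u : ℝ) : ℂ) := by push_cast; ring

/-- The periodic Hilbert transform sends the character `e_p(t) = e^{ipt}` to
`-i · sgn(p) · e_p`: for every integer `p` and real `t`, the principal value
`lim_{ε→0⁺} (1/2π) ∫_{ε ≤ |u| ≤ π} e^{ip(t-u)} cot(u/2) du` equals `-i·sgn(p)·e^{ipt}`. -/
theorem hilbert_transform_character (p : ℤ) (t : ℝ) :
    Filter.Tendsto
      (fun ε : ℝ =>
        (1 / (2 * (Real.pi : ℂ))) *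
          ∫ u in {u : ℝ | ε ≤ |u| ∧ |u| ≤ Real.pi},
            Complex.exp (Complex.I * p * (t - u)) *
              ((Real.cos (u / 2) / Real.sin (u / 2) : ℝ) : ℂ))
      (nhdsWithin (0 : ℝ) (Set.Ioi 0))
      (nhds (-Complex.I * (Int.sign p : ℂ) * Complex.exp (Complex.I * p * t))) := by
  set f : ℝ → ℂ := fun u => Complex.exp (Complex.I * p * ((t:ℂ) - (u:ℝ))) *
      ((Real.cos (u / 2) / Real.sin (u / 2) : ℝ) : ℂ) with hf
  set m : ℕ := p.natAbs - 1 with hm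
  set c : ℂ := -2 * Complex.I * (p.sign : ℂ) * Complex.exp (Complex.I * p * t) with hc
  -- continuity of f away from zeros of sin(u/2)
  have contf : ∀ s : Set ℝ, (∀ u ∈ s, Real.sin (u/2) ≠ 0) → ContinuousOn f s := by
    intro s hs
    apply ContinuousOn.mul
    · apply Continuous.continuousOn
      apply Complex.continuous_exp.comp
      continuity
    · apply Complex.continuous_ofReal.comp_continuousOn
      apply ContinuousOn.div
      · exact (Real.continuous_cos.comp (continuous_id.div_const 2)).continuousOn
      · exact (Real.continuous_sin.comp (continuous_id.div_const 2)).continuousOn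
      · exact hs
  have main_eq : ∀ ε ∈ Set.Ioo (0:ℝ) Real.pi,
      (1 / (2 * (Real.pi : ℂ))) *
          ∫ u in {u : ℝ | ε ≤ |u| ∧ |u| ≤ Real.pi}, f u
      = (1 / (2 * (Real.pi : ℂ))) * (c * ((∫ u in ε..Real.pi, hfun m u : ℝ) : ℂ)) := by
    rintro ε ⟨hε, hεπ⟩
    have hsinpos : ∀ u ∈ Set.Icc ε Real.pi, Real.sin (u/2) ≠ 0 := by
      intro u ⟨h1, h2⟩
      have : 0 < Real.sin (u/2) := Real.sin_pos_of_pos_of_lt_pi (by linarith)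
        (by nlinarith [Real.pi_pos])
      exact this.ne'
    have hsinneg : ∀ u ∈ Set.Icc (-Real.pi) (-ε), Real.sin (u/2) ≠ 0 := by
      intro u ⟨h1, h2⟩
      have : Real.sin (u/2) < 0 := by
        apply Real.sin_neg_of_neg_of_neg_pi_lt (by linarith)
        nlinarith [Real.pi_pos]
      exact this.ne
    have hset : {u : ℝ | ε ≤ |u| ∧ |u| ≤ Real.pi}
        = Set.Icc (-Real.pi) (-ε) ∪ Set.Icc ε Real.pi := by
      ext u
      simp only [Set.mem_setOf_eq, Set.mem_union, Set.mem_Icc, le_abs, abs_le]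
      constructor
      · rintro ⟨h1 | h1, h2, h3⟩
        · right; exact ⟨h1, h3⟩
        · left; exact ⟨h2, by linarith⟩
      · rintro (⟨h1, h2⟩ | ⟨h1, h2⟩)
        · exact ⟨Or.inr (by linarith), h1, by linarith⟩
        · exact ⟨Or.inl h1, by linarith, h2⟩
    have int1 : IntegrableOn f (Set.Icc (-Real.pi) (-ε)) volume :=
      (contf _ hsinneg).integrableOn_Icc
    have int2 : IntegrableOn f (Set.Icc ε Real.pi) volume :=
      (contf _ hsinpos).integrableOn_Icc
    have disj : Disjoint (Set.Icc (-Real.pi) (-ε)) (Set.Icc ε Real.pi) := by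
      apply Set.disjoint_left.mpr
      rintro x ⟨_, h1⟩ ⟨h2, _⟩
      linarith
    rw [hset, setIntegral_union disj measurableSet_Icc int1 int2]
    have e1 : ∫ u in Set.Icc (-Real.pi) (-ε), f u = ∫ u in (-Real.pi)..(-ε), f u := by
      rw [intervalIntegral.integral_of_le (by linarith), ← integral_Icc_eq_integral_Ioc]
    have e2 : ∫ u in Set.Icc ε Real.pi, f u = ∫ u in ε..Real.pi, f u := by
      rw [intervalIntegral.integral_of_le (by linarith), ← integral_Icc_eq_integral_Ioc]
    have e3 : ∫ u in (-Real.pi)..(-ε), f u = ∫ u in ε..Real.pi, f (-u) := by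
      rw [intervalIntegral.integral_comp_neg f]
    rw [e1, e2, e3]
    have huIcc : Set.uIcc ε Real.pi = Set.Icc ε Real.pi := Set.uIcc_of_le (by linarith)
    have ii1 : IntervalIntegrable (fun u => f (-u)) volume ε Real.pi := by
      apply ContinuousOn.intervalIntegrable
      rw [huIcc]
      apply (contf _ hsinneg).comp continuous_neg.continuousOn
      intro x ⟨h1, h2⟩
      exact ⟨by simp; linarith, by simp; linarith⟩
    have ii2 : IntervalIntegrable f volume ε Real.pi := by
      apply ContinuousOn.intervalIntegrable
      rw [huIcc]; exact contf _ hsinpos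
    rw [← intervalIntegral.integral_add ii1 ii2]
    have congr_eq : ∫ u in ε..Real.pi, (f (-u) + f u)
        = ∫ u in ε..Real.pi, c * ((hfun m u : ℝ) : ℂ) := by
      apply intervalIntegral.integral_congr
      intro u hu
      rw [huIcc] at hu
      have hs := hsinpos u hu
      have := pointwise_sum p t u hs
      rw [hf]
      simp only [hm, hc]
      rw [add_comm]
      convert this using 3
    rw [congr_eq, intervalIntegral.integral_const_mul, intervalIntegral.integral_ofReal]
  have hmem : Set.Ioo (0:ℝ) Real.pi ∈ nhdsWithin (0:ℝ) (Set.Ioi 0) :=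
    Ioo_mem_nhdsGT_of_mem ⟨le_refl 0, Real.pi_pos⟩
  have heq : (fun ε : ℝ =>
        (1 / (2 * (Real.pi : ℂ))) * (c * ((∫ u in ε..Real.pi, hfun m u : ℝ) : ℂ)))
      =ᶠ[nhdsWithin (0:ℝ) (Set.Ioi 0)]
      (fun ε : ℝ =>
        (1 / (2 * (Real.pi : ℂ))) *
          ∫ u in {u : ℝ | ε ≤ |u| ∧ |u| ≤ Real.pi}, f u) := by
    filter_upwards [hmem] with ε hε
    exact (main_eq ε hε).symm
  have htend : Filter.Tendsto
      (fun ε : ℝ =>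
        (1 / (2 * (Real.pi : ℂ))) * (c * ((∫ u in ε..Real.pi, hfun m u : ℝ) : ℂ)))
      (nhdsWithin (0 : ℝ) (Set.Ioi 0))
      (nhds ((1 / (2 * (Real.pi : ℂ))) * (c * ((Real.pi : ℝ) : ℂ)))) := by
    apply Filter.Tendsto.const_mul
    apply Filter.Tendsto.const_mul
    exact (Complex.continuous_ofReal.tendsto _).comp (hfun_tendsto m)
  have hval : (1 / (2 * (Real.pi : ℂ))) * (c * ((Real.pi : ℝ) : ℂ))
      = -Complex.I * (Int.sign p : ℂ) * Complex.exp (Complex.I * p * t) := by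
    rw [hc]
    have hπ : (Real.pi : ℂ) ≠ 0 := Complex.ofReal_ne_zero.mpr Real.pi_ne_zero
    field_simp
  rw [← hval]
  exact htend.congr' heq
end

section
/- Let 𝓗 be a nonzero finite-dimensional complex inner product space and A : 𝓗 → 𝓗 a self-adjoint linear operator with exp(2πi·A) = id (so every eigenvalue of A is an integer). Then for every integer m, the Bochner integral (1/2π) ∫_{−π}^{π} e^{−i m t} · exp(i t A) dt equals the orthogonal projection of 𝓗 onto the eigenspace ker(A − m·id) (the zero operator if m is not an eigenvalue). -/
open MeasureTheory intervalIntegral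

/-- The orthogonal projection of `H` onto the eigenspace `ker (A - μ·id)` of `A`,
viewed as an operator `H →L[ℂ] H` (the zero operator if `μ` is not an eigenvalue). -/
noncomputable def eigenProjCLM {H : Type*} [NormedAddCommGroup H]
    [InnerProductSpace ℂ H] [FiniteDimensional ℂ H]
    (A : H →L[ℂ] H) (μ : ℂ) : H →L[ℂ] H :=
  (Module.End.eigenspace (A : H →ₗ[ℂ] H) μ).subtypeL.comp
    (Submodule.orthogonalProjectionOnto (Module.End.eigenspace (A : H →ₗ[ℂ] H) μ))

lemma exp_smul_apply_eig {H : Type*} [NormedAddCommGroup H]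
    [InnerProductSpace ℂ H] [FiniteDimensional ℂ H]
    (A : H →L[ℂ] H) {μ : ℂ} {v : H} (hv : A v = μ • v) (c : ℂ) :
    NormedSpace.exp (c • A) v = Complex.exp (c * μ) • v := by
  have hpow : ∀ n : ℕ, ((c • A) ^ n) v = (c * μ) ^ n • v := by
    intro n
    induction n with
    | zero => simp
    | succ n ih =>
      have h1 : (c • A) v = (c * μ) • v := by
        simp [hv, smul_smul]
      rw [pow_succ, ContinuousLinearMap.mul_apply, h1, _root_.map_smul, ih, smul_smul, ← pow_succ']
  have hs := NormedSpace.expSeries_summable' (𝕂 := ℂ) (c • A)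
  have h1 : NormedSpace.exp (c • A) v
      = ∑' n : ℕ, ((n.factorial⁻¹ : ℂ) • (c • A) ^ n) v := by
    rw [NormedSpace.exp_eq_tsum ℂ]
    simpa using (ContinuousLinearMap.apply ℂ H v).map_tsum hs
  have h2 : ∀ n : ℕ, ((n.factorial⁻¹ : ℂ) • (c • A) ^ n) v
      = ((n.factorial⁻¹ : ℂ) * (c * μ) ^ n) • v := by
    intro n
    rw [ContinuousLinearMap.smul_apply, hpow, smul_smul]
  rw [h1]
  simp_rw [h2]
  have hs2 : Summable fun n : ℕ => (n.factorial⁻¹ : ℂ) * (c * μ) ^ n := by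
    simpa [smul_eq_mul] using NormedSpace.expSeries_summable' (𝕂 := ℂ) (c * μ)
  rw [hs2.tsum_smul_const]
  congr 1
  rw [Complex.exp_eq_exp_ℂ, NormedSpace.exp_eq_tsum ℂ]
  simp [smul_eq_mul]

/-- For a self-adjoint operator `A` with `exp(2πi·A) = id` (so all eigenvalues are
integers) on a nonzero finite-dimensional complex inner product space, and every
integer `m`, the Bochner integral `(1/2π) ∫_{-π}^{π} e^{-imt}·exp(itA) dt` equals the
orthogonal projection onto the eigenspace `ker (A - m·id)`. -/
theorem fourier_coeff_unitary_group_eq_eigenprojection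
    {H : Type*} [NormedAddCommGroup H] [InnerProductSpace ℂ H]
    [FiniteDimensional ℂ H] [Nontrivial H]
    (A : H →L[ℂ] H) (hA : IsSelfAdjoint A)
    (hper : NormedSpace.exp (((2 * Real.pi : ℝ) * Complex.I) • A) = 1)
    (m : ℤ) :
    (1 / (2 * Real.pi)) •
      ∫ t in (-Real.pi : ℝ)..Real.pi,
        Complex.exp (-Complex.I * m * t) •
          NormedSpace.exp (((t : ℂ) * Complex.I) • A)
    = eigenProjCLM A (m : ℂ) := by
  classical
  have hSym : (A : H →ₗ[ℂ] H).IsSymmetric := hA.isSymmetric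
  have hn : Module.finrank ℂ H = Module.finrank ℂ H := rfl
  set b := hSym.eigenvectorBasis hn with hb
  set ev := hSym.eigenvalues hn with hev
  refine ContinuousLinearMap.coe_injective (b.toBasis.ext fun i => ?_)
  simp only [ContinuousLinearMap.coe_coe, OrthonormalBasis.coe_toBasis]
  set v := b i with hvdef
  set μ : ℂ := (ev i : ℂ) with hμdef
  have hAv : A v = μ • v := hSym.apply_eigenvectorBasis hn i
  have hvne : v ≠ 0 := b.toBasis.ne_zero i
  -- μ is an integer
  have hexp1 : Complex.exp (((2 * Real.pi : ℝ) * Complex.I) * μ) = 1 := by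
    have h := ContinuousLinearMap.ext_iff.mp hper v
    rw [exp_smul_apply_eig A hAv] at h
    simp only [ContinuousLinearMap.one_apply] at h
    have h2 : Complex.exp (((2 * Real.pi : ℝ) : ℂ) * Complex.I * μ) • v = (1 : ℂ) • v := by
      rw [one_smul]; exact h
    exact smul_left_injective ℂ hvne h2
  obtain ⟨k, hk⟩ := Complex.exp_eq_one_iff.mp hexp1
  have h2piI : (2 * (Real.pi : ℂ) * Complex.I) ≠ 0 := by
    simp [Real.pi_ne_zero, Complex.I_ne_zero, Complex.ofReal_ne_zero]
  have hμk : μ = (k : ℂ) := by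
    have h1 : μ * (2 * (Real.pi : ℂ) * Complex.I) = (k : ℂ) * (2 * (Real.pi : ℂ) * Complex.I) := by
      rw [← hk]; push_cast; ring
    exact mul_right_cancel₀ h2piI h1
  -- continuity / integrability
  have hcont : Continuous fun t : ℝ =>
      Complex.exp (-Complex.I * m * t) • NormedSpace.exp (((t : ℂ) * Complex.I) • A) := by
    apply Continuous.fun_smul
    · exact Complex.continuous_exp.comp (by continuity)
    · exact (continuous_iff_continuousAt.mpr fun x => (NormedSpace.exp_analytic (𝕂 := ℂ) x).continuousAt).comp
        (((Complex.continuous_ofReal.mul continuous_const)).smul continuous_const)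
  have hInt : IntervalIntegrable (fun t : ℝ =>
      Complex.exp (-Complex.I * m * t) • NormedSpace.exp (((t : ℂ) * Complex.I) • A))
      volume (-Real.pi) Real.pi := hcont.intervalIntegrable _ _
  -- push application through the integral
  rw [ContinuousLinearMap.smul_apply, ContinuousLinearMap.intervalIntegral_apply hInt]
  have hpt : ∀ t : ℝ,
      (Complex.exp (-Complex.I * m * t) • NormedSpace.exp (((t : ℂ) * Complex.I) • A)) v
      = Complex.exp ((Complex.I * (μ - m)) * t) • v := by
    intro t
    rw [ContinuousLinearMap.smul_apply, exp_smul_apply_eig A hAv, smul_smul,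
      ← Complex.exp_add]
    congr 2
    ring
  simp_rw [hpt]
  rw [intervalIntegral.integral_smul_const]
  by_cases hkm : k = m
  · -- μ = m : integral is 2π, projection is identity on v
    have hμm : μ = (m : ℂ) := by rw [hμk, hkm]
    have hc0 : Complex.I * (μ - m) = 0 := by rw [hμm]; ring
    have hval : (∫ t in (-Real.pi : ℝ)..Real.pi,
        Complex.exp ((Complex.I * (μ - m)) * t)) = (2 * Real.pi : ℝ) := by
      simp only [hc0, zero_mul, Complex.exp_zero]
      rw [intervalIntegral.integral_const, Complex.real_smul, mul_one]
      push_cast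
      ring
    rw [hval]
    have hone : ((1 / (2 * Real.pi) : ℝ)) • (((2 * Real.pi : ℝ) : ℂ)) = (1 : ℂ) := by
      rw [Complex.real_smul]
      push_cast
      rw [one_div, inv_mul_eq_div]
      exact div_self (mul_ne_zero two_ne_zero (Complex.ofReal_ne_zero.mpr Real.pi_ne_zero))
    rw [← smul_assoc, hone, one_smul]
    -- RHS
    have hmem : v ∈ Module.End.eigenspace (A : H →ₗ[ℂ] H) (m : ℂ) := by
      rw [Module.End.mem_eigenspace_iff, ← hμm]
      exact hAv
    simp only [eigenProjCLM, ContinuousLinearMap.comp_apply, Submodule.subtypeL_apply]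
    exact (Submodule.starProjection_eq_self_iff.mpr hmem).symm
  · -- μ ≠ m : integral is 0, v is orthogonal to the eigenspace
    have hc0 : Complex.I * (μ - m) ≠ 0 := by
      rw [hμk]
      simp only [ne_eq, mul_eq_zero, Complex.I_ne_zero, false_or, sub_eq_zero]
      exact_mod_cast fun h => hkm (by exact_mod_cast h)
    have hval : (∫ t in (-Real.pi : ℝ)..Real.pi,
        Complex.exp ((Complex.I * (μ - m)) * t)) = 0 := by
      rw [integral_exp_mul_complex hc0]
      have heq : Complex.exp ((Complex.I * (μ - m)) * (Real.pi : ℂ))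
          = Complex.exp ((Complex.I * (μ - m)) * ((-Real.pi : ℝ) : ℂ)) := by
        have h3 : (Complex.I * (μ - m)) * (Real.pi : ℂ)
            = (Complex.I * (μ - m)) * ((-Real.pi : ℝ) : ℂ)
              + ((k - m : ℤ) : ℂ) * (2 * Real.pi * Complex.I) := by
          rw [hμk]; push_cast; ring
        rw [h3, Complex.exp_add, Complex.exp_int_mul_two_pi_mul_I, mul_one]
      rw [heq]
      simp
    rw [hval, zero_smul, smul_zero]
    -- RHS is zero
    have hμne : μ ≠ (m : ℂ) := by
      rw [hμk]
      exact_mod_cast fun h => hkm (by exact_mod_cast h)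
    have hmemμ : v ∈ Module.End.eigenspace (A : H →ₗ[ℂ] H) μ :=
      Module.End.mem_eigenspace_iff.mpr hAv
    have hmem : v ∈ (Module.End.eigenspace (A : H →ₗ[ℂ] H) (m : ℂ))ᗮ := by
      rw [Submodule.mem_orthogonal]
      intro w hw
      exact hSym.orthogonalFamily_eigenspaces (fun h => hμne h.symm) ⟨w, hw⟩ ⟨v, hmemμ⟩
    simp only [eigenProjCLM, ContinuousLinearMap.comp_apply, Submodule.subtypeL_apply]
    rw [Submodule.orthogonalProjectionOnto_apply_of_mem_orthogonal hmem]
    simp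
end

section
/- Let 𝓗 be a nonzero finite-dimensional complex inner product space and A : 𝓗 → 𝓗 a self-adjoint linear operator with exp(2πi·A) = id (so every eigenvalue of A is an integer). Let E ∈ ℝ and let ⌈E⌉ denote the ceiling of E. Then the spectral projection 1_{[E,∞)}(A) equals (1/2)·( i·(1/2π) ∫₀^π ( exp(−i t A)·e^{i⌈E⌉t} − exp(i t A)·e^{−i⌈E⌉t} )·cot(t/2) dt + id + (1/2π) ∫_{−π}^{π} exp(i t A)·e^{−i⌈E⌉t} dt ). -/
open MeasureTheory intervalIntegral

/-- The spectral projection `1_{[E,∞)}(A) = ∑_{m ∈ spec(A), m ≥ E} P_m` of an operator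
all of whose eigenvalues are integers; the sum over integers `m ≥ E` of the orthogonal
projections onto `ker (A - m·id)` (only finitely many terms are nonzero). -/
noncomputable def spectralProjCLM {H : Type*} [NormedAddCommGroup H]
    [InnerProductSpace ℂ H] [FiniteDimensional ℂ H]
    (A : H →L[ℂ] H) (E : ℝ) : H →L[ℂ] H :=
  ∑' m : ℤ, if E ≤ (m : ℝ) then eigenProjCLM A (m : ℂ) else 0

namespace HilbertFormulaAux

open Complex Finset

variable {H : Type*} [NormedAddCommGroup H] [InnerProductSpace ℂ H] [FiniteDimensional ℂ H]

/-- Powers of `c • A` on an eigenvector. -/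
lemma pow_apply_eigen (A : H →L[ℂ] H) {v : H} {μ : ℂ} (hv : A v = μ • v) (c : ℂ) :
    ∀ n : ℕ, ((c • A) ^ n) v = (c * μ) ^ n • v := by
  intro n
  induction n with
  | zero => simp
  | succ n ih =>
    rw [pow_succ, ContinuousLinearMap.mul_apply, ContinuousLinearMap.smul_apply, hv, _root_.map_smul,
      _root_.map_smul, ih, pow_succ]
    rw [smul_smul, smul_smul]
    ring_nf

/-- `exp (c • A)` on an eigenvector. -/
lemma exp_apply_eigen (A : H →L[ℂ] H) {v : H} {μ : ℂ} (hv : A v = μ • v) (c : ℂ) :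
    NormedSpace.exp (c • A) v = Complex.exp (c * μ) • v := by
  have h1 : NormedSpace.exp (c • A) v = ∑' n : ℕ, (((Nat.factorial n : ℂ))⁻¹ • (c • A) ^ n) v := by
    rw [NormedSpace.exp_eq_tsum ℂ]
    exact (ContinuousLinearMap.apply ℂ H v).map_tsum (NormedSpace.expSeries_summable' (c • A))
  rw [h1]
  have h2 : ∀ n : ℕ, (((Nat.factorial n : ℂ))⁻¹ • (c • A) ^ n) v = (((Nat.factorial n : ℂ))⁻¹ * (c * μ) ^ n) • v := by
    intro n
    rw [ContinuousLinearMap.smul_apply, pow_apply_eigen A hv, smul_smul]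
  rw [tsum_congr h2]
  have hs : Summable fun n : ℕ => ((Nat.factorial n : ℂ))⁻¹ * (c * μ) ^ n := by
    simpa [smul_eq_mul] using NormedSpace.expSeries_summable' (𝕂 := ℂ) (c * μ)
  rw [hs.tsum_smul_const]
  congr 1
  rw [Complex.exp_eq_exp_ℂ, NormedSpace.exp_eq_tsum ℂ]
  simp [smul_eq_mul]


variable (A : H →L[ℂ] H)

lemma eigen_int (hper : NormedSpace.exp (((2 * Real.pi : ℝ) * Complex.I) • A) = 1)
    {v : H} {μ : ℂ} (hv : A v = μ • v) (hv0 : v ≠ 0) : ∃ m : ℤ, μ = m := by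
  have h1 := exp_apply_eigen A hv (((2 * Real.pi : ℝ) * Complex.I))
  rw [hper, ContinuousLinearMap.one_apply] at h1
  have h2 : Complex.exp (((2 * Real.pi : ℝ) : ℂ) * Complex.I * μ) = 1 := by
    by_contra h
    have h3 : (Complex.exp (((2 * Real.pi : ℝ) : ℂ) * Complex.I * μ) - 1) • v = 0 := by
      rw [sub_smul, one_smul, ← h1, sub_self]
    rcases smul_eq_zero.mp h3 with h4 | h4
    · exact h (sub_eq_zero.mp h4)
    · exact hv0 h4
  obtain ⟨n, hn⟩ := Complex.exp_eq_one_iff.mp h2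
  refine ⟨n, ?_⟩
  have hπ : (2 * (Real.pi : ℂ) * Complex.I) ≠ 0 := by
    simp [Real.pi_ne_zero, Complex.I_ne_zero]
  push_cast at hn
  refine mul_right_cancel₀ hπ ?_
  linear_combination hn

lemma eigen_norm_le {v : H} {μ : ℂ} (hv : A v = μ • v) (hv0 : v ≠ 0) : ‖μ‖ ≤ ‖A‖ := by
  have h1 : ‖μ‖ * ‖v‖ ≤ ‖A‖ * ‖v‖ := by
    rw [← norm_smul, ← hv]; exact A.le_opNorm v
  exact le_of_mul_le_mul_right h1 (norm_pos_iff.mpr hv0)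

lemma eigenProj_apply_mem {μ : ℂ} {v : H} (hv : A v = μ • v) : eigenProjCLM A μ v = v := by
  have hm : v ∈ Module.End.eigenspace (A : H →ₗ[ℂ] H) μ :=
    Module.End.mem_eigenspace_iff.mpr hv
  have h2 := Submodule.orthogonalProjectionOnto_mem_subspace_eq_self
    (K := Module.End.eigenspace (A : H →ₗ[ℂ] H) μ) ⟨v, hm⟩
  calc eigenProjCLM A μ v
      = ↑(Submodule.orthogonalProjectionOnto (Module.End.eigenspace (A : H →ₗ[ℂ] H) μ) v) := rfl
    _ = v := by rw [show (v : H) = ((⟨v, hm⟩ : Module.End.eigenspace (A : H →ₗ[ℂ] H) μ) : H) from rfl, h2]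

lemma eigenProj_apply_ne (hA : IsSelfAdjoint A) {μ ν : ℂ} (hne : ν ≠ μ) {v : H}
    (hv : A v = ν • v) : eigenProjCLM A μ v = 0 := by
  have hm : v ∈ Module.End.eigenspace (A : H →ₗ[ℂ] H) ν :=
    Module.End.mem_eigenspace_iff.mpr hv
  have hperp : v ∈ (Module.End.eigenspace (A : H →ₗ[ℂ] H) μ)ᗮ := by
    intro u hu
    simpa using hA.isSymmetric.orthogonalFamily_eigenspaces hne.symm ⟨u, hu⟩ ⟨v, hm⟩
  calc eigenProjCLM A μ v
      = ↑(Submodule.orthogonalProjectionOnto (Module.End.eigenspace (A : H →ₗ[ℂ] H) μ) v) := rfl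
    _ = 0 := by
        rw [Submodule.orthogonalProjectionOnto_apply_of_mem_orthogonal hperp]; rfl

lemma ext_eigen (hA : IsSelfAdjoint A)
    (hper : NormedSpace.exp (((2 * Real.pi : ℝ) * Complex.I) • A) = 1)
    (T S : H →L[ℂ] H)
    (h : ∀ (m : ℤ) (v : H), A v = (m : ℂ) • v → T v = S v) : T = S := by
  ext v
  have htop : (⨆ μ, Module.End.eigenspace (A : H →ₗ[ℂ] H) μ) = ⊤ := by
    rw [← Submodule.orthogonal_eq_bot_iff]
    exact hA.isSymmetric.orthogonalComplement_iSup_eigenspaces_eq_bot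
  have hv : v ∈ (⨆ μ, Module.End.eigenspace (A : H →ₗ[ℂ] H) μ) := by
    rw [htop]; trivial
  refine Submodule.iSup_induction _ (motive := fun x => T x = S x) hv ?_ (by simp) ?_
  · intro μ x hx
    by_cases hx0 : x = 0
    · simp [hx0]
    · have hAx : A x = μ • x := Module.End.mem_eigenspace_iff.mp hx
      obtain ⟨m, rfl⟩ := eigen_int A hper hAx hx0
      exact h m x hAx
  · intro x y hx hy; rw [map_add, map_add, hx, hy]

/-- All integers that can be eigenvalues of `A`. -/
noncomputable def specSet : Finset ℤ := Finset.Icc (-(⌈‖A‖⌉)) ⌈‖A‖⌉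

lemma mem_specSet {m : ℤ} {v : H} (hv : A v = (m : ℂ) • v) (hv0 : v ≠ 0) :
    m ∈ specSet A := by
  have h1 : |(m : ℝ)| ≤ ‖A‖ := by
    have := eigen_norm_le A hv hv0
    rwa [show ‖((m : ℤ) : ℂ)‖ = |(m : ℝ)| by
      rw [show ((m : ℤ) : ℂ) = ((m : ℝ) : ℂ) by push_cast; ring, Complex.norm_real,
        Real.norm_eq_abs]] at this
  rw [abs_le] at h1
  rw [specSet, Finset.mem_Icc]
  constructor
  · have : ((-(⌈‖A‖⌉) : ℤ) : ℝ) ≤ (m : ℝ) := by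
      push_cast; linarith [Int.le_ceil ‖A‖]
    exact_mod_cast this
  · have : ((m : ℤ) : ℝ) ≤ ((⌈‖A‖⌉ : ℤ) : ℝ) := le_trans h1.2 (Int.le_ceil ‖A‖)
    exact_mod_cast this

lemma eigenProj_eq_zero {m : ℤ} (hm : m ∉ specSet A) : eigenProjCLM A (m : ℂ) = 0 := by
  have hbot : Module.End.eigenspace (A : H →ₗ[ℂ] H) (m : ℂ) = ⊥ := by
    by_contra hne
    obtain ⟨v, hv, hv0⟩ := Submodule.ne_bot_iff _ |>.mp hne
    exact hm (mem_specSet A (Module.End.mem_eigenspace_iff.mp hv) hv0)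
  ext x
  have h2 : (↑(Submodule.orthogonalProjectionOnto (Module.End.eigenspace (A : H →ₗ[ℂ] H) (m : ℂ)) x) : H)
      = 0 :=
    (Submodule.eq_bot_iff _).mp hbot _
      (Submodule.orthogonalProjectionOnto (Module.End.eigenspace (A : H →ₗ[ℂ] H) (m : ℂ)) x).2
  show (↑(Submodule.orthogonalProjectionOnto (Module.End.eigenspace (A : H →ₗ[ℂ] H) (m : ℂ)) x) : H)
      = (0 : H →L[ℂ] H) x
  rw [h2, ContinuousLinearMap.zero_apply]

lemma exp_eq_sum (hA : IsSelfAdjoint A)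
    (hper : NormedSpace.exp (((2 * Real.pi : ℝ) * Complex.I) • A) = 1) (c : ℂ) :
    NormedSpace.exp (c • A)
      = ∑ m ∈ specSet A, Complex.exp (c * m) • eigenProjCLM A (m : ℂ) := by
  apply ext_eigen A hA hper
  intro m v hv
  rw [exp_apply_eigen A hv c, ContinuousLinearMap.sum_apply]
  by_cases hv0 : v = 0
  · simp [hv0]
  have hmem : m ∈ specSet A := mem_specSet A hv hv0
  rw [Finset.sum_eq_single m ?h1 ?h2]
  · rw [ContinuousLinearMap.smul_apply, eigenProj_apply_mem A hv]
  case h1 =>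
    intro b _ hbm
    have hne : ((m : ℤ) : ℂ) ≠ ((b : ℤ) : ℂ) := by exact_mod_cast hbm.symm
    rw [ContinuousLinearMap.smul_apply, eigenProj_apply_ne A hA hne hv, smul_zero]
  case h2 => intro h; exact absurd hmem h

lemma spectralProj_apply_eigen (hA : IsSelfAdjoint A) (E : ℝ) {m : ℤ} {v : H}
    (hv : A v = (m : ℂ) • v) :
    spectralProjCLM A E v = if E ≤ (m : ℝ) then v else 0 := by
  have hzero : ∀ b ∉ specSet A,
      (if E ≤ (b : ℝ) then eigenProjCLM A (b : ℂ) else 0) = 0 := by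
    intro b hb; rw [eigenProj_eq_zero A hb]; simp
  unfold spectralProjCLM
  rw [tsum_eq_sum hzero, ContinuousLinearMap.sum_apply]
  by_cases hv0 : v = 0
  · simp [hv0]
  have hmem : m ∈ specSet A := mem_specSet A hv hv0
  rw [Finset.sum_eq_single m ?h1 ?h2]
  · by_cases hE : E ≤ (m : ℝ)
    · simp [hE, eigenProj_apply_mem A hv]
    · simp [hE]
  case h1 =>
    intro b _ hbm
    have hne : ((m : ℤ) : ℂ) ≠ ((b : ℤ) : ℂ) := by exact_mod_cast hbm.symm
    by_cases hE : E ≤ (b : ℝ)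
    · simp [hE, eigenProj_apply_ne A hA hne hv]
    · simp [hE]
  case h2 => intro h; exact absurd hmem h



/-! ### Scalar integrals -/

lemma trig_ident (k : ℕ) (t : ℝ) :
    Real.cos (t / 2) * Real.sin (((k : ℝ) + 1) * t)
      = Real.sin (t / 2) * (1 + Real.cos (((k : ℝ) + 1) * t)
          + 2 * ∑ j ∈ Finset.range k, Real.cos (((j : ℝ) + 1) * t)) := by
  induction k with
  | zero =>
    have hs := Real.sin_two_mul (t / 2)
    have hc := Real.cos_two_mul (t / 2)
    rw [show 2 * (t / 2) = t by ring] at hs hc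
    simp only [Nat.cast_zero, zero_add, one_mul, Finset.range_zero, Finset.sum_empty]
    rw [hs, hc]; ring
  | succ k ih =>
    have hS : Real.sin (((k : ℝ) + 1 + 1) * t)
        = Real.sin (((k : ℝ) + 1) * t) * Real.cos t + Real.cos (((k : ℝ) + 1) * t) * Real.sin t := by
      rw [show ((k : ℝ) + 1 + 1) * t = ((k : ℝ) + 1) * t + t by ring, Real.sin_add]
    have hC : Real.cos (((k : ℝ) + 1 + 1) * t)
        = Real.cos (((k : ℝ) + 1) * t) * Real.cos t - Real.sin (((k : ℝ) + 1) * t) * Real.sin t := by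
      rw [show ((k : ℝ) + 1 + 1) * t = ((k : ℝ) + 1) * t + t by ring, Real.cos_add]
    have hs := Real.sin_two_mul (t / 2)
    have hc := Real.cos_two_mul (t / 2)
    rw [show 2 * (t / 2) = t by ring] at hs hc
    have hpyth := Real.sin_sq_add_cos_sq (t / 2)
    rw [Finset.sum_range_succ]
    push_cast
    push_cast at ih
    linear_combination Real.cos (t / 2) * hS - Real.sin (t / 2) * hC
      + (Real.cos (t / 2) * Real.cos (((k : ℝ) + 1) * t)
          + Real.sin (t / 2) * Real.sin (((k : ℝ) + 1) * t)) * hs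
      + (Real.cos (t / 2) * Real.sin (((k : ℝ) + 1) * t)
          - Real.sin (t / 2) * Real.cos (((k : ℝ) + 1) * t)) * hc
      + ih
      + 2 * Real.cos (t / 2) * Real.sin (((k : ℝ) + 1) * t) * hpyth

/-- The scalar integrand arising from the Hilbert-transform integral. -/
noncomputable def phi (k : ℤ) (t : ℝ) : ℂ :=
  (Real.cos (t / 2) / Real.sin (t / 2)) •
    (Complex.exp (Complex.I * (k : ℂ) * t) - Complex.exp (-(Complex.I * (k : ℂ) * t)))

lemma phi_neg (k : ℤ) (t : ℝ) : phi (-k) t = -phi k t := by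
  unfold phi
  rw [show (Complex.I * ((-k : ℤ) : ℂ) * t) = -(Complex.I * (k : ℂ) * t) by push_cast; ring,
    neg_neg, ← smul_neg]
  congr 1
  ring

/-- The continuous trigonometric polynomial equal to `phi (k+1)` on `(0, π]`. -/
noncomputable def psi (k : ℕ) (t : ℝ) : ℂ :=
  2 * Complex.I * ((1 + Real.cos (((k : ℝ) + 1) * t)
      + 2 * ∑ j ∈ Finset.range k, Real.cos (((j : ℝ) + 1) * t) : ℝ) : ℂ)

lemma psi_continuous (k : ℕ) : Continuous (psi k) := by
  unfold psi
  fun_prop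

lemma phi_eq_psi (k : ℕ) {t : ℝ} (ht : t ∈ Set.Ioc (0 : ℝ) Real.pi) :
    phi ((k : ℤ) + 1) t = psi k t := by
  obtain ⟨ht0, htπ⟩ := ht
  have hsin : Real.sin (t / 2) ≠ 0 := by
    have h1 : 0 < t / 2 := by linarith
    have h2 : t / 2 < Real.pi := by
      have := Real.pi_pos; linarith
    exact (Real.sin_pos_of_pos_of_lt_pi h1 h2).ne'
  have hx : Complex.I * (((k : ℤ) + 1 : ℤ) : ℂ) * t = (((((k : ℝ) + 1) * t : ℝ)) : ℂ) * Complex.I := by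
    push_cast; ring
  have he : Complex.exp (Complex.I * (((k : ℤ) + 1 : ℤ) : ℂ) * t)
      - Complex.exp (-(Complex.I * (((k : ℤ) + 1 : ℤ) : ℂ) * t))
      = 2 * Complex.I * ((Real.sin (((k : ℝ) + 1) * t) : ℝ) : ℂ) := by
    rw [hx, ← neg_mul, show (-(((((k : ℝ) + 1) * t : ℝ)) : ℂ)) = (((-(((k : ℝ) + 1) * t) : ℝ)) : ℂ) by push_cast; ring,
      Complex.exp_mul_I, Complex.exp_mul_I]
    rw [← Complex.ofReal_cos, ← Complex.ofReal_sin, ← Complex.ofReal_cos, ← Complex.ofReal_sin]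
    rw [Real.cos_neg, Real.sin_neg]
    push_cast
    ring
  have hreal : Real.cos (t / 2) / Real.sin (t / 2) * Real.sin (((k : ℝ) + 1) * t)
      = 1 + Real.cos (((k : ℝ) + 1) * t)
          + 2 * ∑ j ∈ Finset.range k, Real.cos (((j : ℝ) + 1) * t) := by
    rw [div_mul_eq_mul_div, div_eq_iff hsin]
    linear_combination trig_ident k t
  unfold phi psi
  rw [he, Complex.real_smul]
  rw [← hreal]
  push_cast
  ring

lemma integral_cos_succ (n : ℕ) :
    (∫ t in (0 : ℝ)..Real.pi, Real.cos (((n : ℝ) + 1) * t)) = 0 := by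
  have h : ((n : ℝ) + 1) ≠ 0 := by positivity
  rw [intervalIntegral.integral_comp_mul_left (fun x => Real.cos x) h]
  have : ((n : ℝ) + 1) * Real.pi = ((n + 1 : ℕ) : ℝ) * Real.pi := by push_cast; ring
  simp [integral_cos, this, Real.sin_nat_mul_pi]

lemma psi_integral (k : ℕ) :
    (∫ t in (0 : ℝ)..Real.pi, psi k t) = 2 * Real.pi * Complex.I := by
  have hint : ∀ j : ℕ, IntervalIntegrable (fun t => Real.cos (((j : ℝ) + 1) * t))
      MeasureTheory.volume (0 : ℝ) Real.pi := by
    intro j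
    exact (by fun_prop : Continuous fun t : ℝ => Real.cos (((j : ℝ) + 1) * t)).intervalIntegrable _ _
  have hreal : (∫ t in (0 : ℝ)..Real.pi, (1 + Real.cos (((k : ℝ) + 1) * t)
      + 2 * ∑ j ∈ Finset.range k, Real.cos (((j : ℝ) + 1) * t))) = Real.pi := by
    rw [intervalIntegral.integral_add, intervalIntegral.integral_add]
    · rw [intervalIntegral.integral_const, integral_cos_succ]
      have hsum : (∫ t in (0 : ℝ)..Real.pi,
          (2 * ∑ j ∈ Finset.range k, Real.cos (((j : ℝ) + 1) * t))) = 0 := by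
        rw [intervalIntegral.integral_const_mul,
          intervalIntegral.integral_finset_sum (fun j _ => hint j)]
        simp [integral_cos_succ]
      rw [hsum]
      simp
    · exact continuous_const.intervalIntegrable _ _
    · exact hint k
    · exact (continuous_const.intervalIntegrable _ _).add (hint k)
    · exact (continuous_const.mul
        (continuous_finset_sum _ (fun j _ => by fun_prop))).intervalIntegrable _ _
  unfold psi
  rw [intervalIntegral.integral_const_mul, intervalIntegral.integral_ofReal, hreal]
  push_cast
  ring



lemma phi_zero (t : ℝ) : phi 0 t = 0 := by unfold phi; simp

lemma phi_pos_intervalIntegrable (n : ℕ) :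
    IntervalIntegrable (phi ((n : ℤ) + 1)) MeasureTheory.volume (0 : ℝ) Real.pi := by
  rw [intervalIntegrable_iff_integrableOn_Ioc_of_le Real.pi_pos.le]
  exact ((psi_continuous n).integrableOn_Ioc).congr_fun
    (fun t ht => (phi_eq_psi n ht).symm) measurableSet_Ioc

lemma phi_intervalIntegrable (k : ℤ) :
    IntervalIntegrable (phi k) MeasureTheory.volume (0 : ℝ) Real.pi := by
  rcases lt_trichotomy k 0 with hk | rfl | hk
  · obtain ⟨n, rfl⟩ : ∃ n : ℕ, k = -((n : ℤ) + 1) := ⟨(-k - 1).toNat, by omega⟩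
    exact (phi_pos_intervalIntegrable n).neg.congr
      (fun t _ => (phi_neg _ t).symm)
  · have h0 : phi 0 = fun _ : ℝ => (0 : ℂ) := funext phi_zero
    rw [h0]
    exact continuous_const.intervalIntegrable _ _
  · obtain ⟨n, rfl⟩ : ∃ n : ℕ, k = (n : ℤ) + 1 := ⟨(k - 1).toNat, by omega⟩
    exact phi_pos_intervalIntegrable n

lemma phi_pos_integral (n : ℕ) :
    (∫ t in (0 : ℝ)..Real.pi, phi ((n : ℤ) + 1) t) = 2 * Real.pi * Complex.I := by
  have h : (∫ t in (0 : ℝ)..Real.pi, phi ((n : ℤ) + 1) t)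
      = ∫ t in (0 : ℝ)..Real.pi, psi n t := by
    rw [intervalIntegral.integral_of_le Real.pi_pos.le,
      intervalIntegral.integral_of_le Real.pi_pos.le]
    exact MeasureTheory.setIntegral_congr_fun measurableSet_Ioc
      (fun t ht => phi_eq_psi n ht)
  rw [h, psi_integral]

lemma phi_integral (k : ℤ) :
    (∫ t in (0 : ℝ)..Real.pi, phi k t)
      = if 0 < k then 2 * Real.pi * Complex.I
        else if k < 0 then -(2 * Real.pi * Complex.I) else 0 := by
  rcases lt_trichotomy k 0 with hk | rfl | hk
  · obtain ⟨n, rfl⟩ : ∃ n : ℕ, k = -((n : ℤ) + 1) := ⟨(-k - 1).toNat, by omega⟩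
    rw [if_neg (by omega), if_pos hk]
    have h : (∫ t in (0 : ℝ)..Real.pi, phi (-((n : ℤ) + 1)) t)
        = ∫ t in (0 : ℝ)..Real.pi, -phi ((n : ℤ) + 1) t := by
      congr 1
      funext t
      exact phi_neg _ t
    rw [h, intervalIntegral.integral_neg, phi_pos_integral n]
  · have h0 : phi 0 = fun _ : ℝ => (0 : ℂ) := funext phi_zero
    rw [h0]
    simp
  · obtain ⟨n, rfl⟩ : ∃ n : ℕ, k = (n : ℤ) + 1 := ⟨(k - 1).toNat, by omega⟩
    rw [if_pos hk]
    exact phi_pos_integral n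

lemma fourier_integral (k : ℤ) :
    (∫ t in (-Real.pi)..Real.pi, Complex.exp (Complex.I * (k : ℂ) * t))
      = if k = 0 then (2 * Real.pi : ℂ) else 0 := by
  rcases eq_or_ne k 0 with rfl | hk
  · rw [if_pos rfl]
    simp only [Int.cast_zero, mul_zero, zero_mul, Complex.exp_zero]
    rw [intervalIntegral.integral_const]
    rw [Complex.real_smul]
    push_cast
    ring
  · rw [if_neg hk]
    have hc : (Complex.I * (k : ℂ)) ≠ 0 := by
      simp [Complex.I_ne_zero, hk]
    have hmm : (∫ t in (-Real.pi)..Real.pi, Complex.exp (Complex.I * (k : ℂ) * t))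
        = ∫ t in (-Real.pi)..Real.pi, Complex.exp ((Complex.I * (k : ℂ)) * t) := by
      simp [mul_assoc]
    rw [hmm, integral_exp_mul_complex hc]
    have key : Complex.exp ((Complex.I * (k : ℂ)) * ((Real.pi : ℝ) : ℂ))
        - Complex.exp ((Complex.I * (k : ℂ)) * ((-Real.pi : ℝ) : ℂ)) = 0 := by
      have e1 : (Complex.I * (k : ℂ)) * ((Real.pi : ℝ) : ℂ)
          = (((k : ℝ) * Real.pi : ℝ) : ℂ) * Complex.I := by push_cast; ring
      have e2 : (Complex.I * (k : ℂ)) * ((-Real.pi : ℝ) : ℂ)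
          = ((-((k : ℝ) * Real.pi) : ℝ) : ℂ) * Complex.I := by push_cast; ring
      rw [e1, e2, Complex.exp_mul_I, Complex.exp_mul_I, ← Complex.ofReal_cos,
        ← Complex.ofReal_sin, ← Complex.ofReal_cos, ← Complex.ofReal_sin,
        Real.cos_neg, Real.sin_neg]
      rw [Real.sin_int_mul_pi k]
      push_cast
      ring
    rw [show Complex.exp (Complex.I * (k : ℂ) * ((Real.pi : ℝ) : ℂ))
        - Complex.exp (Complex.I * (k : ℂ) * ((-Real.pi : ℝ) : ℂ)) = (0 : ℂ) from key, zero_div]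



lemma F_apply_eigen (N m : ℤ) {v : H} (hv : A v = (m : ℂ) • v) (t : ℝ) :
    ((Real.cos (t / 2) / Real.sin (t / 2)) •
        (Complex.exp (Complex.I * (N : ℂ) * t) •
            NormedSpace.exp ((-(t : ℂ) * Complex.I) • A) -
          Complex.exp (-Complex.I * (N : ℂ) * t) •
            NormedSpace.exp (((t : ℂ) * Complex.I) • A))) v
      = phi (N - m) t • v := by
  rw [ContinuousLinearMap.smul_apply, ContinuousLinearMap.sub_apply,
    ContinuousLinearMap.smul_apply, ContinuousLinearMap.smul_apply,
    exp_apply_eigen A hv, exp_apply_eigen A hv, smul_smul, smul_smul, ← sub_smul]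
  have e1 : Complex.exp (Complex.I * (N : ℂ) * t) * Complex.exp (-(t : ℂ) * Complex.I * (m : ℂ))
      = Complex.exp (Complex.I * ((N - m : ℤ) : ℂ) * t) := by
    rw [← Complex.exp_add]; congr 1; push_cast; ring
  have e2 : Complex.exp (-Complex.I * (N : ℂ) * t) * Complex.exp ((t : ℂ) * Complex.I * (m : ℂ))
      = Complex.exp (-(Complex.I * ((N - m : ℤ) : ℂ) * t)) := by
    rw [← Complex.exp_add]; congr 1; push_cast; ring
  rw [e1, e2]
  unfold phi
  rw [smul_assoc]

lemma G_apply_eigen (N m : ℤ) {v : H} (hv : A v = (m : ℂ) • v) (t : ℝ) :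
    (Complex.exp (-Complex.I * (N : ℂ) * t) •
        NormedSpace.exp (((t : ℂ) * Complex.I) • A)) v
      = Complex.exp (Complex.I * ((m - N : ℤ) : ℂ) * t) • v := by
  rw [ContinuousLinearMap.smul_apply, exp_apply_eigen A hv, smul_smul, ← Complex.exp_add]
  congr 2
  push_cast
  ring

lemma smul_helper {v : H} (a b : ℂ) :
    (1 / 2 : ℂ) • (Complex.I • ((1 / (2 * Real.pi)) • (a • v)) + v
        + (1 / (2 * Real.pi)) • (b • v))
      = ((1 / 2 : ℂ) * (Complex.I * (1 / (2 * (Real.pi : ℂ)) * a) + 1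
          + 1 / (2 * (Real.pi : ℂ)) * b)) • v := by
  have hc : ∀ (c : ℂ) (w : H), (1 / (2 * Real.pi) : ℝ) • (c • w)
      = (1 / (2 * (Real.pi : ℂ)) * c) • w := by
    intro c w
    rw [← Complex.coe_smul, smul_smul]
    congr 1
    push_cast
    ring
  rw [hc, hc, smul_smul]
  rw [show (Complex.I * (1 / (2 * (Real.pi : ℂ)) * a)) • v + v
        + (1 / (2 * (Real.pi : ℂ)) * b) • v
      = (Complex.I * (1 / (2 * (Real.pi : ℂ)) * a) + 1 + 1 / (2 * (Real.pi : ℂ)) * b) • v by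
    rw [add_smul, add_smul, one_smul]]
  rw [smul_smul]


end HilbertFormulaAux

set_option synthInstance.maxHeartbeats 1000000 in
/-- For a self-adjoint operator `A` with `exp(2πi·A) = id` on a nonzero
finite-dimensional complex inner product space and `E ∈ ℝ`, the spectral projection
`1_{[E,∞)}(A)` equals
`(1/2)·( i·(1/2π)∫₀^π (e^{i⌈E⌉t}·exp(-itA) - e^{-i⌈E⌉t}·exp(itA))·cot(t/2) dt + id
  + (1/2π)∫_{-π}^{π} e^{-i⌈E⌉t}·exp(itA) dt )`. -/
theorem spectral_projection_eq_hilbert_transform_formula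
    {H : Type*} [NormedAddCommGroup H] [InnerProductSpace ℂ H]
    [FiniteDimensional ℂ H] [Nontrivial H]
    (A : H →L[ℂ] H) (hA : IsSelfAdjoint A)
    (hper : NormedSpace.exp (((2 * Real.pi : ℝ) * Complex.I) • A) = 1)
    (E : ℝ) :
    spectralProjCLM A E =
      ((1 : ℂ) / 2) •
        (Complex.I •
          ((1 / (2 * Real.pi)) •
            ∫ t in (0 : ℝ)..Real.pi,
              (Real.cos (t / 2) / Real.sin (t / 2)) •
                (Complex.exp (Complex.I * (⌈E⌉ : ℂ) * t) •
                    NormedSpace.exp ((-(t : ℂ) * Complex.I) • A) -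
                  Complex.exp (-Complex.I * (⌈E⌉ : ℂ) * t) •
                    NormedSpace.exp (((t : ℂ) * Complex.I) • A)))
          + 1
          + (1 / (2 * Real.pi)) •
            ∫ t in (-Real.pi : ℝ)..Real.pi,
              Complex.exp (-Complex.I * (⌈E⌉ : ℂ) * t) •
                NormedSpace.exp (((t : ℂ) * Complex.I) • A)) := by
  apply HilbertFormulaAux.ext_eigen A hA hper
  intro m v hv
  rw [HilbertFormulaAux.spectralProj_apply_eigen A hA E hv]
  have hπC : ((Real.pi : ℝ) : ℂ) ≠ 0 := Complex.ofReal_ne_zero.mpr Real.pi_ne_zero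
  -- integrability of the two operator-valued integrands
  have hGcont : Continuous fun t : ℝ =>
      Complex.exp (-Complex.I * ((⌈E⌉ : ℤ) : ℂ) * t) •
        NormedSpace.exp (((t : ℂ) * Complex.I) • A) := by
    apply Continuous.fun_smul
    · exact Complex.continuous_exp.comp (by fun_prop)
    · letI : NormedAlgebra ℚ (H →L[ℂ] H) := NormedAlgebra.restrictScalars ℚ ℂ _
      exact NormedSpace.exp_continuous.comp
        ((Complex.continuous_ofReal.mul continuous_const).smul continuous_const)
  have hGint : IntervalIntegrable (fun t : ℝ =>
      Complex.exp (-Complex.I * ((⌈E⌉ : ℤ) : ℂ) * t) •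
        NormedSpace.exp (((t : ℂ) * Complex.I) • A))
      MeasureTheory.volume (-Real.pi) Real.pi := hGcont.intervalIntegrable _ _
  have hFeq : (fun t : ℝ =>
      (Real.cos (t / 2) / Real.sin (t / 2)) •
        (Complex.exp (Complex.I * ((⌈E⌉ : ℤ) : ℂ) * t) •
            NormedSpace.exp ((-(t : ℂ) * Complex.I) • A) -
          Complex.exp (-Complex.I * ((⌈E⌉ : ℤ) : ℂ) * t) •
            NormedSpace.exp (((t : ℂ) * Complex.I) • A)))
      = fun t : ℝ => ∑ mm ∈ HilbertFormulaAux.specSet A,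
          HilbertFormulaAux.phi (⌈E⌉ - mm) t • eigenProjCLM A (mm : ℂ) := by
    funext t
    rw [HilbertFormulaAux.exp_eq_sum A hA hper (-(t : ℂ) * Complex.I),
      HilbertFormulaAux.exp_eq_sum A hA hper ((t : ℂ) * Complex.I),
      Finset.smul_sum, Finset.smul_sum, ← Finset.sum_sub_distrib, Finset.smul_sum]
    refine Finset.sum_congr rfl fun mm _ => ?_
    rw [smul_smul, smul_smul, ← sub_smul]
    have e1 : Complex.exp (Complex.I * ((⌈E⌉ : ℤ) : ℂ) * t)
          * Complex.exp (-(t : ℂ) * Complex.I * (mm : ℂ))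
        = Complex.exp (Complex.I * ((⌈E⌉ - mm : ℤ) : ℂ) * t) := by
      rw [← Complex.exp_add]; congr 1; push_cast; ring
    have e2 : Complex.exp (-Complex.I * ((⌈E⌉ : ℤ) : ℂ) * t)
          * Complex.exp ((t : ℂ) * Complex.I * (mm : ℂ))
        = Complex.exp (-(Complex.I * ((⌈E⌉ - mm : ℤ) : ℂ) * t)) := by
      rw [← Complex.exp_add]; congr 1; push_cast; ring
    rw [e1, e2]
    unfold HilbertFormulaAux.phi
    rw [smul_assoc]
  have hFint : IntervalIntegrable (fun t : ℝ =>
      (Real.cos (t / 2) / Real.sin (t / 2)) •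
        (Complex.exp (Complex.I * ((⌈E⌉ : ℤ) : ℂ) * t) •
            NormedSpace.exp ((-(t : ℂ) * Complex.I) • A) -
          Complex.exp (-Complex.I * ((⌈E⌉ : ℤ) : ℂ) * t) •
            NormedSpace.exp (((t : ℂ) * Complex.I) • A)))
      MeasureTheory.volume 0 Real.pi := by
    rw [hFeq]
    have := IntervalIntegrable.sum (μ := MeasureTheory.volume) (a := (0:ℝ)) (b := Real.pi)
      (HilbertFormulaAux.specSet A)
      (f := fun mm (t : ℝ) => HilbertFormulaAux.phi (⌈E⌉ - mm) t • eigenProjCLM A (mm : ℂ))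
      (fun mm _ => ⟨((HilbertFormulaAux.phi_intervalIntegrable _).1).smul_const _,
        ((HilbertFormulaAux.phi_intervalIntegrable _).2).smul_const _⟩)
    exact this.congr (fun t _ => by simp)
  -- apply everything to `v`
  rw [ContinuousLinearMap.smul_apply, ContinuousLinearMap.add_apply,
    ContinuousLinearMap.add_apply, ContinuousLinearMap.smul_apply,
    ContinuousLinearMap.smul_apply, ContinuousLinearMap.smul_apply,
    ContinuousLinearMap.one_apply,
    ContinuousLinearMap.intervalIntegral_apply hFint v,
    ContinuousLinearMap.intervalIntegral_apply hGint v]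
  simp_rw [HilbertFormulaAux.F_apply_eigen A ⌈E⌉ m hv, HilbertFormulaAux.G_apply_eigen A ⌈E⌉ m hv]
  rw [intervalIntegral.integral_smul_const, intervalIntegral.integral_smul_const,
    HilbertFormulaAux.phi_integral, HilbertFormulaAux.fourier_integral,
    HilbertFormulaAux.smul_helper]
  rcases lt_trichotomy m ⌈E⌉ with hmN | hmN | hmN
  · rw [if_pos (by omega : (0:ℤ) < ⌈E⌉ - m), if_neg (by omega : ¬ (m - ⌈E⌉ = 0))]
    rw [if_neg (by rw [← Int.ceil_le]; omega : ¬ E ≤ (m : ℝ))]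
    have hC : (1 / 2 : ℂ) * (Complex.I * (1 / (2 * (Real.pi : ℂ)) * (2 * Real.pi * Complex.I)) + 1
        + 1 / (2 * (Real.pi : ℂ)) * 0) = 0 := by
      field_simp
      linear_combination (2 * (Real.pi : ℂ)) * Complex.I_sq
    rw [hC, zero_smul]
  · rw [if_neg (by omega : ¬ (0:ℤ) < ⌈E⌉ - m), if_neg (by omega : ¬ (⌈E⌉ - m < 0)),
      if_pos (by omega : m - ⌈E⌉ = 0)]
    rw [if_pos (by rw [← Int.ceil_le]; omega : E ≤ (m : ℝ))]
    have hC : (1 / 2 : ℂ) * (Complex.I * (1 / (2 * (Real.pi : ℂ)) * 0) + 1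
        + 1 / (2 * (Real.pi : ℂ)) * (2 * Real.pi)) = 1 := by
      field_simp
      ring
    rw [hC, one_smul]
  · rw [if_neg (by omega : ¬ (0:ℤ) < ⌈E⌉ - m), if_pos (by omega : ⌈E⌉ - m < 0),
      if_neg (by omega : ¬ (m - ⌈E⌉ = 0))]
    rw [if_pos (by rw [← Int.ceil_le]; omega : E ≤ (m : ℝ))]
    have hC : (1 / 2 : ℂ) * (Complex.I * (1 / (2 * (Real.pi : ℂ)) * (-(2 * Real.pi * Complex.I))) + 1
        + 1 / (2 * (Real.pi : ℂ)) * 0) = 1 := by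
      field_simp
      linear_combination -(2 * (Real.pi : ℂ)) * Complex.I_sq
    rw [hC, one_smul]
end

section
/- Let E ∈ (0,1) and let l : ℕ → ℕ be a sequence with l(k) ≤ k for all k and such that there exists C > 0 with |l(k) − k·E| ≤ C for all k. Then C(k, l(k)) · E^{l(k)} · (1−E)^{k−l(k)} · √(2π·k·E·(1−E)) = 1 + O(1/k); that is, there exist C' > 0 and k₀ such that for all k ≥ k₀, |C(k, l(k))·E^{l(k)}·(1−E)^{k−l(k)}·√(2π k E(1−E)) − 1| ≤ C'/k. -/
open Real Filter Stirling Topology Nat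

lemma my_log1p_bound {x : ℝ} (hx : |x| ≤ 1/2) : |Real.log (1+x) - x| ≤ 2*x^2 := by
  have h1 : |(-x)| < 1 := by rw [abs_neg]; linarith [abs_nonneg x]
  have key := Real.abs_log_sub_add_sum_range_le h1 1
  simp only [Finset.sum_range_one, pow_one, Nat.cast_zero, zero_add, div_one,
    sub_neg_eq_add, abs_neg] at key
  rw [show -x + Real.log (1+x) = Real.log (1+x) - x by ring] at key
  have h2 : (0:ℝ) < 1 - |x| := by linarith
  have h3 : |x|^(1+1)/(1-|x|) ≤ 2*x^2 := by
    rw [div_le_iff₀ h2]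
    have h4 : 0 ≤ 1 - 2*|x| := by linarith
    have h5 := mul_nonneg (sq_nonneg x) h4
    have e : |x|^(1+1) = x^2 := by norm_num [sq_abs]
    rw [e]
    nlinarith
  exact key.trans h3

lemma my_log1p_abs {x : ℝ} (hx : |x| ≤ 1/2) : |Real.log (1+x)| ≤ 2*|x| := by
  have h := my_log1p_bound hx
  have h2 : 2*x^2 ≤ |x| := by nlinarith [sq_abs x, abs_nonneg x]
  calc |Real.log (1+x)| = |(Real.log (1+x) - x) + x| := by ring_nf
    _ ≤ |Real.log (1+x) - x| + |x| := abs_add_le _ _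
    _ ≤ 2*|x| := by linarith

lemma my_stirling_tendsto_log :
    Tendsto (fun m : ℕ => Real.log (stirlingSeq (m+1))) atTop (𝓝 (Real.log (√π))) :=
  ((Real.continuousAt_log (ne_of_gt (Real.sqrt_pos.2 Real.pi_pos))).tendsto).comp
    (tendsto_stirlingSeq_sqrt_pi.comp (tendsto_add_atTop_nat 1))

lemma my_stirling_lower (n : ℕ) : Real.log (√π) ≤ Real.log (stirlingSeq (n+1)) :=
  log_stirlingSeq'_antitone.le_of_tendsto my_stirling_tendsto_log n

lemma my_stirling_upper (n : ℕ) (hn : 1 ≤ n) :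
    Real.log (stirlingSeq (n+1)) ≤ Real.log (√π) + 1/(4*n) := by
  have key : ∀ m, n ≤ m → Real.log (stirlingSeq (n+1)) - Real.log (stirlingSeq (m+1))
      ≤ 1/(4*(n:ℝ)) - 1/(4*(m:ℝ)) := by
    intro m hm
    induction m, hm using Nat.le_induction with
    | base => simp
    | succ m hm ih =>
      have hstep := log_stirlingSeq_sub_log_stirlingSeq_succ (m+1)
      have hm1 : (1:ℝ) ≤ m := by exact_mod_cast hn.trans hm
      have hcast : ((m+1 : ℕ) : ℝ) = (m:ℝ)+1 := by push_cast; ring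
      rw [hcast] at hstep
      have e1 : 1/(4*(m:ℝ)) - 1/(4*((m:ℝ)+1)) = 1/(4*(m:ℝ)*((m:ℝ)+1)) := by
        field_simp
        ring
      have e2 : 1/(4*((m:ℝ)+1)^2) ≤ 1/(4*(m:ℝ)*((m:ℝ)+1)) := by
        apply one_div_le_one_div_of_le (by positivity)
        nlinarith
      rw [hcast]
      linarith
  have hge : ∀ᶠ m in atTop, Real.log (stirlingSeq (n+1)) - 1/(4*(n:ℝ))
      ≤ Real.log (stirlingSeq (m+1)) := by
    filter_upwards [eventually_ge_atTop n] with m hm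
    have hk := key m hm
    have hmpos : (0:ℝ) < m := by
      have : (1:ℕ) ≤ m := hn.trans hm
      exact_mod_cast Nat.lt_of_lt_of_le Nat.zero_lt_one this
    have : 0 < 1/(4*(m:ℝ)) := by positivity
    linarith
  have := ge_of_tendsto my_stirling_tendsto_log hge
  linarith

lemma my_rbound (n : ℕ) (hn : 2 ≤ n) :
    |Real.log (stirlingSeq n) - Real.log (√π)| ≤ 1/(n:ℝ) := by
  obtain ⟨m, rfl⟩ : ∃ m, n = m + 1 := ⟨n-1, by omega⟩
  have h1 : 1 ≤ m := by omega
  have hm1 : (1:ℝ) ≤ (m:ℝ) := by exact_mod_cast h1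
  have hu := my_stirling_upper m h1
  have hlo := my_stirling_lower m
  have hcast : ((m+1:ℕ):ℝ) = (m:ℝ)+1 := by push_cast; ring
  rw [hcast, abs_le]
  have hdiv : 1/(4*(m:ℝ)) ≤ 1/((m:ℝ)+1) :=
    one_div_le_one_div_of_le (by positivity) (by linarith)
  have hpos : (0:ℝ) < 1/((m:ℝ)+1) := by positivity
  constructor <;> linarith

lemma my_log_factorial (n : ℕ) (hn : 1 ≤ n) :
    Real.log ((n ! : ℕ) : ℝ) = Real.log (stirlingSeq n) + 1/2 * Real.log (2*n)
      + n * Real.log n - n := by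
  have h := log_stirlingSeq_formula n
  have hnpos : (0:ℝ) < n := by exact_mod_cast hn
  have : Real.log ((n:ℝ) / Real.exp 1) = Real.log n - 1 := by
    rw [Real.log_div (ne_of_gt hnpos) (Real.exp_ne_zero 1), Real.log_exp]
  rw [this] at h
  linarith [h]

set_option maxHeartbeats 2000000 in
lemma my_main_est (E F : ℝ) (hE0 : 0 < E) (hF0 : 0 < F) (hEF : E + F = 1)
    (C : ℝ) (hCpos : 0 < C) (k n m : ℕ) (hknm : n + m = k)
    (hδC : |(n:ℝ) - k*E| ≤ C)
    (haE : 2*C+2 ≤ (k:ℝ)*E) (haF : 2*C+2 ≤ (k:ℝ)*F) :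
    ∃ g : ℝ, (Nat.choose k n : ℝ) * E^n * F^m * Real.sqrt (2*π*k*E*F) = Real.exp g ∧
      |g| ≤ (5*C^2/E + 5*C^2/F + C/(2*E) + C/(2*F) + 1 + 2/E + 2/F)/k := by
  set a : ℝ := (k:ℝ) with hadef
  set b : ℝ := (n:ℝ) with hbdef
  set c : ℝ := (m:ℝ) with hcdef
  clear_value a b c
  have habc : a = b + c := by rw [hadef, hbdef, hcdef, ← hknm]; push_cast; ring
  set δ : ℝ := b - a*E with hδdef
  clear_value δ
  have hbE : b = a*E + δ := by rw [hδdef]; ring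
  have hδ : |δ| ≤ C := hδC
  have haEpos : 0 < a*E := by linarith
  have haFpos : 0 < a*F := by linarith
  have ha0 : 0 < a := by
    rcases mul_pos_iff.mp haEpos with h|h
    · exact h.1
    · linarith [h.2]
  have hδlo : -C ≤ δ := (abs_le.1 hδ).1
  have hδhi : δ ≤ C := (abs_le.1 hδ).2
  have hsum : a*E + a*F = a := by linear_combination a*hEF
  have hb2 : 2 ≤ b := by linarith
  have hcF : c = a*F - δ := by linarith [habc]
  have hc2 : 2 ≤ c := by linarith
  have hbpos : 0 < b := by linarith
  have hcpos : 0 < c := by linarith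
  have hn2 : 2 ≤ n := by rw [hbdef] at hb2; exact_mod_cast hb2
  have hm2 : 2 ≤ m := by rw [hcdef] at hc2; exact_mod_cast hc2
  have hk4 : 2 ≤ k := by omega
  have hblo : a*E/2 ≤ b := by linarith
  have hbhi : b ≤ 2*(a*E) := by linarith
  have hclo : a*F/2 ≤ c := by linarith
  have hchi : c ≤ 2*(a*F) := by linarith
  set u : ℝ := δ/(a*E) with hudef
  set v : ℝ := -δ/(a*F) with hvdef
  clear_value u v
  have h1u : 1 + u = b/(a*E) := by rw [hudef, hbE]; field_simp
  have h1v : 1 + v = c/(a*F) := by rw [hvdef, hcF]; field_simp; ring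
  have h1upos : 0 < 1 + u := by rw [h1u]; positivity
  have h1vpos : 0 < 1 + v := by rw [h1v]; positivity
  have hu_abs : |u| ≤ C/(a*E) := by
    rw [hudef, abs_div, abs_of_pos haEpos]; gcongr
  have hv_abs : |v| ≤ C/(a*F) := by
    rw [hvdef, neg_div, abs_neg, abs_div, abs_of_pos haFpos]; gcongr
  have hu_half : |u| ≤ 1/2 := by
    refine hu_abs.trans ?_
    rw [div_le_iff₀ haEpos]; linarith
  have hv_half : |v| ≤ 1/2 := by
    refine hv_abs.trans ?_
    rw [div_le_iff₀ haFpos]; linarith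
  set g : ℝ := Real.log ((k ! : ℕ):ℝ) - Real.log ((n ! : ℕ):ℝ) - Real.log ((m ! : ℕ):ℝ)
      + b*Real.log E + c*Real.log F + (1/2)*Real.log (2*π*a*E*F) with hgdef
  clear_value g
  have hS : (0:ℝ) < 2*π*a*E*F := by
    have := Real.pi_pos; positivity
  have hfk : (0:ℝ) < ((k ! : ℕ):ℝ) := by exact_mod_cast k.factorial_pos
  have hfn : (0:ℝ) < ((n ! : ℕ):ℝ) := by exact_mod_cast n.factorial_pos
  have hfm : (0:ℝ) < ((m ! : ℕ):ℝ) := by exact_mod_cast m.factorial_pos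
  refine ⟨g, ?_, ?_⟩
  · -- exponential identity
    have hchoose : (Nat.choose k n : ℝ) = ((k ! : ℕ):ℝ)/(((n ! : ℕ):ℝ) * ((m ! : ℕ):ℝ)) := by
      have h : k - n = m := by omega
      rw [Nat.cast_choose ℝ (by omega : n ≤ k), h]
    have hsq : Real.exp ((1/2)*Real.log (2*π*a*E*F)) = Real.sqrt (2*π*a*E*F) := by
      rw [Real.sqrt_eq_rpow, Real.rpow_def_of_pos hS]; ring_nf
    rw [hgdef, Real.exp_add, Real.exp_add, Real.exp_add, Real.exp_sub, Real.exp_sub,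
      Real.exp_log hfk, Real.exp_log hfn, Real.exp_log hfm, hsq, hbdef, hcdef,
      Real.exp_nat_mul, Real.exp_nat_mul, Real.exp_log hE0, Real.exp_log hF0, hchoose]
    ring
  · -- the bound
    have hlpi : Real.log (Real.sqrt π) = Real.log π / 2 := Real.log_sqrt Real.pi_pos.le
    have hgid : g = -(b + 1/2)*Real.log (1+u) - (c + 1/2)*Real.log (1+v)
        + ((Real.log (stirlingSeq k) - Real.log (Real.sqrt π))
          - (Real.log (stirlingSeq n) - Real.log (Real.sqrt π))
          - (Real.log (stirlingSeq m) - Real.log (Real.sqrt π))) := by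
      have ek := my_log_factorial k (by omega)
      have en := my_log_factorial n (by omega)
      have em := my_log_factorial m (by omega)
      rw [← hadef] at ek
      rw [← hbdef] at en
      rw [← hcdef] at em
      have l2a : Real.log (2*a) = Real.log 2 + Real.log a :=
        Real.log_mul two_ne_zero (ne_of_gt ha0)
      have l2b : Real.log (2*b) = Real.log 2 + Real.log b :=
        Real.log_mul two_ne_zero (ne_of_gt hbpos)
      have l2c : Real.log (2*c) = Real.log 2 + Real.log c :=
        Real.log_mul two_ne_zero (ne_of_gt hcpos)
      have lS : Real.log (2*π*a*E*F)
          = Real.log 2 + Real.log π + Real.log a + Real.log E + Real.log F := by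
        rw [Real.log_mul (by positivity) (ne_of_gt hF0),
          Real.log_mul (by positivity) (ne_of_gt hE0),
          Real.log_mul (by positivity) (ne_of_gt ha0),
          Real.log_mul (by norm_num) (ne_of_gt Real.pi_pos)]
      have lu : Real.log (1+u) = Real.log b - Real.log a - Real.log E := by
        rw [h1u, Real.log_div (ne_of_gt hbpos) (ne_of_gt haEpos),
          Real.log_mul (ne_of_gt ha0) (ne_of_gt hE0)]
        ring
      have lv : Real.log (1+v) = Real.log c - Real.log a - Real.log F := by
        rw [h1v, Real.log_div (ne_of_gt hcpos) (ne_of_gt haFpos),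
          Real.log_mul (ne_of_gt ha0) (ne_of_gt hF0)]
        ring
      rw [hgdef, ek, en, em, l2a, l2b, l2c, lS, lu, lv, hlpi, habc]
      ring
    -- splitting the main term
    have hbu : b*u = δ + δ^2/(a*E) := by
      rw [hudef, hbE]; field_simp
    have hcv : c*v = -δ + δ^2/(a*F) := by
      rw [hvdef, hcF]; field_simp; ring
    have hsplit : -(b + 1/2)*Real.log (1+u) - (c + 1/2)*Real.log (1+v)
        = -(δ^2/(a*E) + δ^2/(a*F)) - (u+v)/2
          - (b + 1/2)*(Real.log (1+u) - u) - (c + 1/2)*(Real.log (1+v) - v) := by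
      linear_combination -hbu - hcv
    have hδsq : δ^2 ≤ C^2 := sq_le_sq' hδlo hδhi
    -- individual bounds
    have hEu := my_log1p_bound hu_half
    have hEv := my_log1p_bound hv_half
    have t1 : δ^2/(a*E) ≤ (C^2/E)/a := by
      rw [div_div, mul_comm E a]
      gcongr
    have t2 : δ^2/(a*F) ≤ (C^2/F)/a := by
      rw [div_div, mul_comm F a]
      gcongr
    have t3 : |u| ≤ (C/E)/a := by
      rw [div_div, mul_comm E a]; exact hu_abs
    have t4 : |v| ≤ (C/F)/a := by
      rw [div_div, mul_comm F a]; exact hv_abs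
    have husq : u^2 ≤ (C/(a*E))^2 := sq_le_sq' (abs_le.1 hu_abs).1 (abs_le.1 hu_abs).2
    have hvsq : v^2 ≤ (C/(a*F))^2 := sq_le_sq' (abs_le.1 hv_abs).1 (abs_le.1 hv_abs).2
    have hbhi' : b ≤ 3/2*(a*E) := by linarith
    have hchi' : c ≤ 3/2*(a*F) := by linarith
    have t5 : |(b + 1/2)*(Real.log (1+u) - u)| ≤ (4*C^2/E)/a := by
      rw [abs_mul, abs_of_pos (by linarith : (0:ℝ) < b + 1/2)]
      have hbound : b + 1/2 ≤ 2*(a*E) := by linarith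
      calc (b + 1/2) * |Real.log (1+u) - u| ≤ (2*(a*E)) * (2*u^2) :=
            mul_le_mul hbound hEu (abs_nonneg _) (by positivity)
        _ ≤ (2*(a*E)) * (2*(C/(a*E))^2) := by
            apply mul_le_mul_of_nonneg_left (by linarith) (by positivity)
        _ = (4*C^2/E)/a := by field_simp; ring
    have t6 : |(c + 1/2)*(Real.log (1+v) - v)| ≤ (4*C^2/F)/a := by
      rw [abs_mul, abs_of_pos (by linarith : (0:ℝ) < c + 1/2)]
      have hbound : c + 1/2 ≤ 2*(a*F) := by linarith
      calc (c + 1/2) * |Real.log (1+v) - v| ≤ (2*(a*F)) * (2*v^2) :=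
            mul_le_mul hbound hEv (abs_nonneg _) (by positivity)
        _ ≤ (2*(a*F)) * (2*(C/(a*F))^2) := by
            apply mul_le_mul_of_nonneg_left (by linarith) (by positivity)
        _ = (4*C^2/F)/a := by field_simp; ring
    have rk := my_rbound k hk4
    have rn := my_rbound n hn2
    have rm := my_rbound m hm2
    rw [← hadef] at rk
    rw [← hbdef] at rn
    rw [← hcdef] at rm
    have hb_inv : 1/b ≤ (2/E)/a := by
      have h1 : 1/b ≤ 1/(a*E/2) := one_div_le_one_div_of_le (by positivity) hblo
      have h2 : 1/(a*E/2) = (2/E)/a := by field_simp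
      linarith
    have hc_inv : 1/c ≤ (2/F)/a := by
      have h1 : 1/c ≤ 1/(a*F/2) := one_div_le_one_div_of_le (by positivity) hclo
      have h2 : 1/(a*F/2) = (2/F)/a := by field_simp
      linarith
    have ha_inv : 1/a = (1:ℝ)/a := rfl
    have hsumeq : (C^2/E)/a + (C^2/F)/a + (C/(2*E))/a + (C/(2*F))/a + (4*C^2/E)/a
        + (4*C^2/F)/a + (2/E)/a + (2/F)/a + 1/a
        = (5*C^2/E + 5*C^2/F + C/(2*E) + C/(2*F) + 1 + 2/E + 2/F)/a := by
      field_simp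
      ring
    have hδnn : 0 ≤ δ^2/(a*E) := by positivity
    have hδnn' : 0 ≤ δ^2/(a*F) := by positivity
    have b3 := abs_le.1 t3
    have b4 := abs_le.1 t4
    have b5 := abs_le.1 t5
    have b6 := abs_le.1 t6
    have brk := abs_le.1 rk
    have brn := abs_le.1 rn
    have brm := abs_le.1 rm
    have e34 : (C/(2*E))/a = ((C/E)/a)/2 := by ring
    have e44 : (C/(2*F))/a = ((C/F)/a)/2 := by ring
    rw [hgid, hsplit, abs_le]
    constructor <;>
      linarith [t1, t2, b3.1, b3.2, b4.1, b4.2, b5.1, b5.2, b6.1, b6.2,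
        brk.1, brk.2, brn.1, brn.2, brm.1, brm.2, hsumeq, hδnn, hδnn', hb_inv, hc_inv,
        e34, e44]

/-- de Moivre–Laplace / Stirling estimate: if `E ∈ (0,1)` and `l(k)` stays within a
bounded distance of `k·E`, then
`C(k, l(k))·E^{l(k)}·(1−E)^{k−l(k)}·√(2πkE(1−E)) = 1 + O(1/k)`. -/
theorem binomial_pmf_near_mean (E : ℝ) (hE : E ∈ Set.Ioo (0 : ℝ) 1)
    (l : ℕ → ℕ) (hl : ∀ k, l k ≤ k)
    (hbd : ∃ C > 0, ∀ k : ℕ, |(l k : ℝ) - k * E| ≤ C) :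
    ∃ C' > 0, ∃ k₀ : ℕ, ∀ k ≥ k₀,
      |(Nat.choose k (l k) : ℝ) * E ^ (l k) * (1 - E) ^ (k - l k) *
          Real.sqrt (2 * Real.pi * k * E * (1 - E)) - 1| ≤ C' / k := by
  obtain ⟨hE0, hE1⟩ := hE
  obtain ⟨C, hCpos, hC⟩ := hbd
  have hF0 : (0:ℝ) < 1 - E := by linarith
  have hDpos : (0:ℝ) < 5*C^2/E + 5*C^2/(1-E) + C/(2*E) + C/(2*(1-E)) + 1 + 2/E + 2/(1-E) := by
    positivity
  obtain ⟨k₀, hk₀⟩ := exists_nat_ge (max (max ((2*C+2)/E) ((2*C+2)/(1-E)))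
    (5*C^2/E + 5*C^2/(1-E) + C/(2*E) + C/(2*(1-E)) + 1 + 2/E + 2/(1-E)))
  refine ⟨2*(5*C^2/E + 5*C^2/(1-E) + C/(2*E) + C/(2*(1-E)) + 1 + 2/E + 2/(1-E)),
    by positivity, k₀, fun k hk => ?_⟩
  have hka : (k₀:ℝ) ≤ (k:ℝ) := Nat.cast_le.2 hk
  have h1 : (2*C+2)/E ≤ (k:ℝ) :=
    le_trans (le_trans (le_max_left _ _) (le_max_left _ _)) (hk₀.trans hka)
  have h2 : (2*C+2)/(1-E) ≤ (k:ℝ) :=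
    le_trans (le_trans (le_max_right _ _) (le_max_left _ _)) (hk₀.trans hka)
  have hD' : 5*C^2/E + 5*C^2/(1-E) + C/(2*E) + C/(2*(1-E)) + 1 + 2/E + 2/(1-E) ≤ (k:ℝ) :=
    le_trans (le_max_right _ _) (hk₀.trans hka)
  have haE : 2*C+2 ≤ (k:ℝ)*E := by rw [div_le_iff₀ hE0] at h1; linarith
  have haF : 2*C+2 ≤ (k:ℝ)*(1-E) := by rw [div_le_iff₀ hF0] at h2; linarith
  have hknm : l k + (k - l k) = k := by have := hl k; omega
  obtain ⟨g, hge, hgb⟩ := my_main_est E (1-E) hE0 hF0 (by ring) C hCpos k (l k) (k - l k)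
    hknm (hC k) haE haF
  rw [hge]
  have hk0' : (0:ℝ) < k := lt_of_lt_of_le hDpos hD'
  have hgb1 : |g| ≤ 1 := hgb.trans (by rw [div_le_one hk0']; exact hD')
  calc |Real.exp g - 1| ≤ 2*|g| := Real.abs_exp_sub_one_le hgb1
    _ ≤ 2*((5*C^2/E + 5*C^2/(1-E) + C/(2*E) + C/(2*(1-E)) + 1 + 2/E + 2/(1-E))/k) := by
        linarith [hgb]
    _ = 2*(5*C^2/E + 5*C^2/(1-E) + C/(2*E) + C/(2*(1-E)) + 1 + 2/E + 2/(1-E))/k := by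
        ring
end

section
/- Let E ∈ (0,1), let u ≥ 0 be a real number with u ≠ E/(1−E), and let l : ℕ → ℕ be a sequence with l(k) ≤ k for all k and such that there exists C > 0 with |l(k) − k·E| ≤ C for all k. Then for every natural number N, k^N · (k+1) · C(k, l(k)) · u^{l(k)} / (1+u)^k → 0 as k → ∞. -/
open Filter Real

private lemma choose_mul_pow_le_aux (x : ℝ) (hx : 0 ≤ x) (k l : ℕ) (h : l ≤ k) :
    (k.choose l : ℝ) * x ^ l ≤ (1 + x) ^ k := by
  rw [add_comm, add_pow]
  have hm : l ∈ Finset.range (k + 1) := Finset.mem_range.2 (Nat.lt_succ_of_le h)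
  have := Finset.single_le_sum (f := fun i => x ^ i * (1 : ℝ) ^ (k - i) * (k.choose i : ℝ))
    (fun i _ => by positivity) hm
  simpa [mul_comm] using this

private lemma exists_t (E u : ℝ) (hE0 : 0 < E) (hE1 : E < 1) (hu : 0 ≤ u)
    (hune : u ≠ E / (1 - E)) :
    ∃ t : ℝ, 0 < t ∧ 1 + t * u < t ^ E * (1 + u) := by
  set g : ℝ → ℝ := fun x => x ^ E * (1 + u) - 1 - x * u with hg_def
  have h1u : (0:ℝ) < 1 + u := by linarith
  have hD : E * (1 + u) - u ≠ 0 := by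
    intro h
    apply hune
    have h1E : (0:ℝ) < 1 - E := by linarith
    field_simp
    nlinarith
  have hg1 : g 1 = 0 := by simp [hg_def]
  have hder : HasDerivAt g (E * (1 + u) - u) 1 := by
    have h1 : HasDerivAt (fun x : ℝ => x ^ E) (E * (1:ℝ) ^ (E - 1)) 1 :=
      Real.hasDerivAt_rpow_const (Or.inl one_ne_zero)
    have := ((h1.mul_const (1 + u)).sub_const 1).sub ((hasDerivAt_id (1:ℝ)).mul_const u)
    exact this.congr_deriv (by simp)
  have hslope : Tendsto (slope g 1) (nhdsWithin 1 {(1:ℝ)}ᶜ) (nhds (E * (1 + u) - u)) :=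
    hasDerivAt_iff_tendsto_slope.1 hder
  rcases lt_or_gt_of_ne hD with hneg | hpos
  · -- derivative negative: take t < 1
    have hev : ∀ᶠ t in nhdsWithin 1 {(1:ℝ)}ᶜ, slope g 1 t < 0 :=
      hslope.eventually (eventually_lt_nhds hneg)
    have hev' : ∀ᶠ t in nhdsWithin (1:ℝ) (Set.Iio 1), slope g 1 t < 0 :=
      hev.filter_mono (nhdsWithin_mono _ (fun x hx => ne_of_lt hx))
    have hIoo : Set.Ioo (0:ℝ) 1 ∈ nhdsWithin (1:ℝ) (Set.Iio 1) :=
      Ioo_mem_nhdsLT_of_mem (by constructor <;> norm_num)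
    obtain ⟨t, hts, htI⟩ := (hev'.and (eventually_of_mem hIoo (fun x hx => hx))).exists
    refine ⟨t, htI.1, ?_⟩
    have ht1 : t - 1 < 0 := by linarith [htI.2]
    have : g t = slope g 1 t * (t - 1) := by
      rw [slope_def_field, div_mul_cancel₀ _ (sub_ne_zero.2 (by intro h; rw [h] at ht1; linarith : t ≠ 1)), hg1, sub_zero]
    have hgt : 0 < g t := by
      rw [this]; exact mul_pos_of_neg_of_neg hts ht1
    simp only [hg_def] at hgt; linarith
  · -- derivative positive: take t > 1
    have hev : ∀ᶠ t in nhdsWithin 1 {(1:ℝ)}ᶜ, 0 < slope g 1 t :=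
      hslope.eventually (eventually_gt_nhds hpos)
    have hev' : ∀ᶠ t in nhdsWithin (1:ℝ) (Set.Ioi 1), 0 < slope g 1 t :=
      hev.filter_mono (nhdsWithin_mono _ (fun x hx => ne_of_gt hx))
    obtain ⟨t, hts, ht1⟩ := (hev'.and self_mem_nhdsWithin).exists
    have ht1' : (1:ℝ) < t := ht1
    refine ⟨t, by linarith, ?_⟩
    have : g t = slope g 1 t * (t - 1) := by
      rw [slope_def_field, div_mul_cancel₀ _ (sub_ne_zero.2 (ne_of_gt ht1')), hg1, sub_zero]
    have hgt : 0 < g t := by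
      rw [this]; exact mul_pos hts (by linarith)
    simp only [hg_def] at hgt; linarith

/-- If `E ∈ (0,1)`, `u ≥ 0` with `u ≠ E/(1−E)`, and `l(k)` stays within a bounded
distance of `k·E`, then `(k+1)·C(k,l(k))·u^{l(k)}/(1+u)^k` is `O(k^{−∞})`:
for every `N`, `k^N·(k+1)·C(k,l(k))·u^{l(k)}/(1+u)^k → 0` as `k → ∞`. -/
theorem monomial_section_norm_rapid_decay (E : ℝ) (hE : E ∈ Set.Ioo (0 : ℝ) 1)
    (u : ℝ) (hu : 0 ≤ u) (hune : u ≠ E / (1 - E))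
    (l : ℕ → ℕ) (hl : ∀ k, l k ≤ k)
    (hbd : ∃ C > 0, ∀ k : ℕ, |(l k : ℝ) - k * E| ≤ C) :
    ∀ N : ℕ,
      Filter.Tendsto
        (fun k : ℕ =>
          (k : ℝ) ^ N * (k + 1) * (Nat.choose k (l k) : ℝ) * u ^ (l k) / (1 + u) ^ k)
        Filter.atTop (nhds 0) := by
  obtain ⟨hE0, hE1⟩ := hE
  obtain ⟨C, hC0, hC⟩ := hbd
  obtain ⟨t, ht0, htlt⟩ := exists_t E u hE0 hE1 hu hune
  intro N
  have h1u : (0:ℝ) < 1 + u := by linarith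
  have htE : (0:ℝ) < t ^ E := Real.rpow_pos_of_pos ht0 E
  set r : ℝ := (1 + t * u) / (t ^ E * (1 + u)) with hr_def
  have hr0 : 0 < r := by
    apply div_pos (by nlinarith) (by positivity)
  have hr1 : r < 1 := (div_lt_one (by positivity)).2 htlt
  set m : ℝ := min (t ^ (C:ℝ)) (t ^ (-C : ℝ)) with hm_def
  have hm0 : 0 < m := lt_min (Real.rpow_pos_of_pos ht0 _) (Real.rpow_pos_of_pos ht0 _)
  -- pointwise bound
  have key : ∀ k : ℕ,
      (k : ℝ) ^ N * (k + 1) * (Nat.choose k (l k) : ℝ) * u ^ (l k) / (1 + u) ^ k ≤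
        (1 / m) * (((k : ℝ) + 1) ^ (N + 1) * r ^ k) := by
    intro k
    have hstep1 : (Nat.choose k (l k) : ℝ) * u ^ (l k) * t ^ ((l k : ℝ)) ≤ (1 + t * u) ^ k := by
      have := choose_mul_pow_le_aux (t * u) (by positivity) k (l k) (hl k)
      calc (Nat.choose k (l k) : ℝ) * u ^ (l k) * t ^ ((l k : ℝ))
          = (Nat.choose k (l k) : ℝ) * (t * u) ^ (l k) := by
            rw [Real.rpow_natCast, mul_pow]; ring
        _ ≤ (1 + t * u) ^ k := this
    have hstep2 : (t ^ E) ^ k * m ≤ t ^ ((l k : ℝ)) := by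
      have hd := abs_le.1 (hC k)
      have hsplit : t ^ ((l k : ℝ)) = t ^ (E * (k:ℝ)) * t ^ ((l k : ℝ) - (k:ℝ) * E) := by
        rw [← Real.rpow_add ht0]; ring_nf
      have hpow : t ^ (E * (k:ℝ)) = (t ^ E) ^ k := by
        rw [Real.rpow_mul ht0.le, Real.rpow_natCast]
      have hmd : m ≤ t ^ ((l k : ℝ) - (k:ℝ) * E) := by
        rcases le_total 1 t with h1t | ht1
        · calc m ≤ t ^ (-C : ℝ) := min_le_right _ _
            _ ≤ t ^ ((l k : ℝ) - (k:ℝ) * E) :=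
              Real.rpow_le_rpow_of_exponent_le h1t (by linarith [hd.1])
        · calc m ≤ t ^ (C : ℝ) := min_le_left _ _
            _ ≤ t ^ ((l k : ℝ) - (k:ℝ) * E) :=
              Real.rpow_le_rpow_of_exponent_ge ht0 ht1 (by linarith [hd.2])
      calc (t ^ E) ^ k * m = t ^ (E * (k:ℝ)) * m := by rw [hpow]
        _ ≤ t ^ (E * (k:ℝ)) * t ^ ((l k : ℝ) - (k:ℝ) * E) := by
            apply mul_le_mul_of_nonneg_left hmd (by positivity)
        _ = t ^ ((l k : ℝ)) := hsplit.symm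
    have hcu : (Nat.choose k (l k) : ℝ) * u ^ (l k) ≤ (1 + t * u) ^ k / ((t ^ E) ^ k * m) := by
      rw [le_div_iff₀ (by positivity)]
      calc (Nat.choose k (l k) : ℝ) * u ^ (l k) * ((t ^ E) ^ k * m)
          ≤ (Nat.choose k (l k) : ℝ) * u ^ (l k) * t ^ ((l k : ℝ)) := by
            apply mul_le_mul_of_nonneg_left hstep2 (by positivity)
        _ ≤ (1 + t * u) ^ k := hstep1
    have hkpow : (k : ℝ) ^ N * ((k : ℝ) + 1) ≤ ((k : ℝ) + 1) ^ (N + 1) := by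
      rw [pow_succ]
      apply mul_le_mul_of_nonneg_right _ (by positivity)
      exact pow_le_pow_left₀ (Nat.cast_nonneg k) (by linarith) N
    have hrk : (1 + t * u) ^ k / ((t ^ E) ^ k * (1 + u) ^ k) = r ^ k := by
      rw [hr_def, div_pow, mul_pow]
    calc (k : ℝ) ^ N * ((k:ℝ) + 1) * (Nat.choose k (l k) : ℝ) * u ^ (l k) / (1 + u) ^ k
        ≤ (k : ℝ) ^ N * ((k:ℝ) + 1) * ((1 + t * u) ^ k / ((t ^ E) ^ k * m)) / (1 + u) ^ k := by
          apply div_le_div_of_nonneg_right _ (by positivity)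
          rw [mul_assoc]
          apply mul_le_mul_of_nonneg_left _ (by positivity)
          exact hcu
      _ = (1 / m) * ((k : ℝ) ^ N * ((k:ℝ) + 1) * ((1 + t * u) ^ k / ((t ^ E) ^ k * (1 + u) ^ k))) := by
          field_simp
      _ = (1 / m) * ((k : ℝ) ^ N * ((k:ℝ) + 1) * r ^ k) := by rw [hrk]
      _ ≤ (1 / m) * (((k : ℝ) + 1) ^ (N + 1) * r ^ k) := by
          apply mul_le_mul_of_nonneg_left _ (by positivity)
          apply mul_le_mul_of_nonneg_right hkpow (by positivity)
  -- the bound tends to zero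
  have hB : Tendsto (fun k : ℕ => (1 / m) * (((k : ℝ) + 1) ^ (N + 1) * r ^ k)) atTop (nhds 0) := by
    have hsum : Tendsto (fun n : ℕ => (n : ℝ) ^ (N + 1) * r ^ n) atTop (nhds 0) :=
      (summable_pow_mul_geometric_of_norm_lt_one (R := ℝ) (N + 1) (r := r)
        (by rw [Real.norm_eq_abs, abs_of_pos hr0]; exact hr1)).tendsto_atTop_zero
    have hshift : Tendsto (fun k : ℕ => ((k : ℝ) + 1) ^ (N + 1) * r ^ (k + 1)) atTop (nhds 0) := by
      have := hsum.comp (tendsto_add_atTop_nat 1)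
      simp only [Function.comp_def] at this
      exact this.congr (fun k => by push_cast; ring)
    have : Tendsto (fun k : ℕ => (1 / m) * r⁻¹ * (((k : ℝ) + 1) ^ (N + 1) * r ^ (k + 1)))
        atTop (nhds 0) := by
      simpa using hshift.const_mul ((1 / m) * r⁻¹)
    apply this.congr
    intro k
    rw [pow_succ]
    field_simp
    ring
  apply squeeze_zero (fun k => by positivity) key hB
end

section
/- Let E ∈ (0,1) and let l : ℕ → ℕ be a sequence with l(k) ≤ k for all k and such that there exists C > 0 with |l(k) − k·E| ≤ C for all k. Set c(k) = l(k) − k·E. Then (1 − c(k)/l(k))^{l(k)} · (1 + c(k)/(k−l(k)))^{k−l(k)} = 1 + O(1/k); that is, there exist C' > 0 and k₀ such that for all k ≥ k₀, |(1 − c(k)/l(k))^{l(k)}·(1 + c(k)/(k−l(k)))^{k−l(k)} − 1| ≤ C'/k. -/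
set_option maxHeartbeats 1000000

lemma aux_pow_le_exp (x : ℝ) (hx : 0 ≤ 1 + x) (n : ℕ) :
    (1 + x) ^ n ≤ Real.exp (n * x) := by
  calc (1 + x) ^ n ≤ (Real.exp x) ^ n := by
        apply pow_le_pow_left₀ hx
        linarith [Real.add_one_le_exp x]
    _ = Real.exp (n * x) := by rw [← Real.exp_nat_mul]

lemma aux_exp_le_pow (x : ℝ) (hx1 : -1 ≤ x) (hx2 : x ≤ 1) (n : ℕ) :
    Real.exp (n * x) * (1 - n * x ^ 2) ≤ (1 + x) ^ n := by
  have hx0 : (0:ℝ) ≤ 1 + x := by linarith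
  have h2 : 1 - x ≤ Real.exp (-x) := by linarith [Real.add_one_le_exp (-x)]
  have h3 : Real.exp x * (1 - x) ≤ 1 := by
    have := mul_le_mul_of_nonneg_left h2 (Real.exp_pos x).le
    rwa [← Real.exp_add, add_neg_cancel, Real.exp_zero] at this
  have h1 : Real.exp x * (1 - x ^ 2) ≤ 1 + x := by
    calc Real.exp x * (1 - x ^ 2) = (Real.exp x * (1 - x)) * (1 + x) := by ring
      _ ≤ 1 * (1 + x) := mul_le_mul_of_nonneg_right h3 hx0
      _ = 1 + x := one_mul _
  have hsq : x ^ 2 ≤ 1 := by nlinarith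
  have h4 : 0 ≤ Real.exp x * (1 - x ^ 2) := by
    have := (Real.exp_pos x).le; nlinarith
  have h5 : (Real.exp x * (1 - x ^ 2)) ^ n ≤ (1 + x) ^ n := pow_le_pow_left₀ h4 h1 n
  have h6 : (Real.exp x * (1 - x ^ 2)) ^ n = Real.exp (n * x) * (1 - x ^ 2) ^ n := by
    rw [mul_pow, ← Real.exp_nat_mul]
  have h7 : 1 - n * x ^ 2 ≤ (1 - x ^ 2) ^ n := by
    have := one_add_mul_le_pow (a := -x ^ 2) (by nlinarith) n
    calc 1 - n * x ^ 2 = 1 + n * (-x ^ 2) := by ring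
      _ ≤ (1 + -x ^ 2) ^ n := this
      _ = (1 - x ^ 2) ^ n := by ring_nf
  calc Real.exp (n * x) * (1 - n * x ^ 2)
      ≤ Real.exp (n * x) * (1 - x ^ 2) ^ n :=
        mul_le_mul_of_nonneg_left h7 (Real.exp_pos _).le
    _ = (Real.exp x * (1 - x ^ 2)) ^ n := h6.symm
    _ ≤ (1 + x) ^ n := h5

/-- If `E ∈ (0,1)`, `l(k)` stays within a bounded distance of `k·E`, and
`c(k) = l(k) − k·E`, then
`(1 − c(k)/l(k))^{l(k)} · (1 + c(k)/(k−l(k)))^{k−l(k)} = 1 + O(1/k)`. -/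
theorem binomial_correction_factor (E : ℝ) (hE : E ∈ Set.Ioo (0 : ℝ) 1)
    (l : ℕ → ℕ) (hl : ∀ k, l k ≤ k)
    (hbd : ∃ C > 0, ∀ k : ℕ, |(l k : ℝ) - k * E| ≤ C)
    (c : ℕ → ℝ) (hc : ∀ k, c k = (l k : ℝ) - k * E) :
    ∃ C' > 0, ∃ k₀ : ℕ, ∀ k ≥ k₀,
      |(1 - c k / (l k : ℝ)) ^ (l k) * (1 + c k / ((k : ℝ) - (l k : ℝ))) ^ (k - l k) - 1|
        ≤ C' / k := by
  obtain ⟨hE0, hE1⟩ := hE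
  have h1E : (0:ℝ) < 1 - E := by linarith
  obtain ⟨C, hCpos, hC⟩ := hbd
  set M : ℝ := C + 2 * C ^ 2 + 2 with hM
  have hMpos : 0 < M := by positivity
  obtain ⟨k₀, hk₀⟩ := exists_nat_ge (max (M / E) (M / (1 - E)))
  refine ⟨2 * C ^ 2 / E + 2 * C ^ 2 / (1 - E) + 1, by positivity, k₀, ?_⟩
  intro k hk
  have hkk : (k₀:ℝ) ≤ k := Nat.cast_le.mpr hk
  have hkE : M ≤ k * E := by
    have h1 : M / E ≤ (k:ℝ) := le_trans (le_max_left _ _) (le_trans hk₀ hkk)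
    calc M = (M / E) * E := by field_simp
      _ ≤ k * E := mul_le_mul_of_nonneg_right h1 hE0.le
  have hk1E : M ≤ k * (1 - E) := by
    have h1 : M / (1 - E) ≤ (k:ℝ) := le_trans (le_max_right _ _) (le_trans hk₀ hkk)
    calc M = (M / (1 - E)) * (1 - E) := by field_simp
      _ ≤ k * (1 - E) := mul_le_mul_of_nonneg_right h1 h1E.le
  have hk0 : (0:ℝ) ≤ k := Nat.cast_nonneg k
  have hkEpos : (0:ℝ) < k * E := lt_of_lt_of_le hMpos hkE
  have hk1Epos : (0:ℝ) < k * (1 - E) := lt_of_lt_of_le hMpos hk1E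
  have hkpos : (0:ℝ) < k := by
    rcases Nat.eq_zero_or_pos k with h | h
    · rw [h] at hkE; norm_num at hkE; linarith
    · exact_mod_cast h
  have hck : |c k| ≤ C := by rw [hc]; exact hC k
  have hcl : -C ≤ c k := (abs_le.mp hck).1
  have hcu : c k ≤ C := (abs_le.mp hck).2
  have hc2 : c k ^ 2 ≤ C ^ 2 := sq_le_sq' hcl hcu
  -- bounds on n = l k and m = k - l k
  have hnl : k * E - C ≤ (l k : ℝ) := by
    have := (abs_le.mp (hC k)).1; linarith
  have hnu : (l k : ℝ) ≤ k * E + C := by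
    have := (abs_le.mp (hC k)).2; linarith
  have hmcast : ((k - l k : ℕ) : ℝ) = (k:ℝ) - (l k : ℝ) := by
    rw [Nat.cast_sub (hl k)]
  have hexp : (k:ℝ) * (1 - E) = k - k * E := by ring
  have hml : k * (1 - E) - C ≤ (k:ℝ) - (l k : ℝ) := by linarith
  have hCle : C ≤ 2 * C ^ 2 + 2 := by nlinarith [sq_nonneg (C - 1), sq_nonneg C]
  have hCM : 2 * C ≤ M := by rw [hM]; linarith
  have hnhalf : k * E / 2 ≤ (l k : ℝ) := by linarith
  have hmhalf : k * (1 - E) / 2 ≤ (k:ℝ) - (l k : ℝ) := by linarith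
  have hnpos : (0:ℝ) < l k := by linarith
  have hmpos : (0:ℝ) < (k:ℝ) - (l k : ℝ) := by linarith
  set n : ℝ := (l k : ℝ)
  set m : ℝ := (k:ℝ) - (l k : ℝ)
  -- n, m ≥ 2C² + 2
  have hnbig : 2 * C ^ 2 + 2 ≤ n := by
    have h1 : M - C ≤ n := by linarith
    rw [hM] at h1; linarith
  have hmbig : 2 * C ^ 2 + 2 ≤ m := by
    have h1 : M - C ≤ m := by linarith
    rw [hM] at h1; linarith
  set x : ℝ := -c k / n with hxdef
  set y : ℝ := c k / m with hydef
  have hxb : |x| ≤ 1 := by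
    rw [hxdef, abs_div, abs_neg, abs_of_pos hnpos]
    rw [div_le_one hnpos]
    linarith
  have hyb : |y| ≤ 1 := by
    rw [hydef, abs_div, abs_of_pos hmpos]
    rw [div_le_one hmpos]
    linarith
  have hx1 : -1 ≤ x := (abs_le.mp hxb).1
  have hx2 : x ≤ 1 := (abs_le.mp hxb).2
  have hy1 : -1 ≤ y := (abs_le.mp hyb).1
  have hy2 : y ≤ 1 := (abs_le.mp hyb).2
  have hnx : n * x = -c k := by rw [hxdef]; field_simp
  have hmy : m * y = c k := by rw [hydef]; field_simp
  have hnx2 : n * x ^ 2 = c k ^ 2 / n := by rw [hxdef]; field_simp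
  have hmy2 : m * y ^ 2 = c k ^ 2 / m := by rw [hydef]; field_simp
  -- express the two factors
  have hA : (1 - c k / n) = 1 + x := by rw [hxdef]; ring
  have hB : (1 + c k / m) = 1 + y := by rw [hydef]
  set P : ℝ := (1 - c k / n) ^ (l k) * (1 + c k / m) ^ (k - l k) with hP
  -- upper bound
  have hup : P ≤ 1 := by
    have h1 := aux_pow_le_exp x (by linarith) (l k)
    have h2 := aux_pow_le_exp y (by linarith) (k - l k)
    have hcastn : ((l k : ℕ) : ℝ) = n := rfl
    have hcastm : ((k - l k : ℕ) : ℝ) = m := hmcast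
    rw [hcastn, hnx] at h1
    rw [hcastm, hmy] at h2
    have hApos : (0:ℝ) ≤ (1 + x) ^ (l k) := pow_nonneg (by linarith) _
    calc P = (1 + x) ^ (l k) * (1 + y) ^ (k - l k) := by rw [hP, hA, hB]
      _ ≤ Real.exp (-c k) * Real.exp (c k) := by
          apply mul_le_mul h1 h2 (pow_nonneg (by linarith) _) (Real.exp_pos _).le
      _ = 1 := by rw [← Real.exp_add]; simp
  -- lower bound
  have hlow : 1 - (c k ^ 2 / n + c k ^ 2 / m) ≤ P := by
    have h1 := aux_exp_le_pow x hx1 hx2 (l k)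
    have h2 := aux_exp_le_pow y hy1 hy2 (k - l k)
    have hcastn : ((l k : ℕ) : ℝ) = n := rfl
    have hcastm : ((k - l k : ℕ) : ℝ) = m := hmcast
    rw [hcastn, hnx, hnx2] at h1
    rw [hcastm, hmy, hmy2] at h2
    have hcn : c k ^ 2 / n ≤ 1 / 2 := by
      rw [div_le_iff₀ hnpos]; linarith
    have hcm : c k ^ 2 / m ≤ 1 / 2 := by
      rw [div_le_iff₀ hmpos]; linarith
    have ha0 : 0 ≤ Real.exp (-c k) * (1 - c k ^ 2 / n) :=
      mul_nonneg (Real.exp_pos _).le (by linarith)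
    have hb0 : 0 ≤ Real.exp (c k) * (1 - c k ^ 2 / m) :=
      mul_nonneg (Real.exp_pos _).le (by linarith)
    have hApos : 0 ≤ (1 + x) ^ (l k) := pow_nonneg (by linarith) _
    have hmul : (Real.exp (-c k) * (1 - c k ^ 2 / n)) * (Real.exp (c k) * (1 - c k ^ 2 / m))
        ≤ (1 + x) ^ (l k) * (1 + y) ^ (k - l k) :=
      mul_le_mul h1 h2 hb0 hApos
    have heq : (Real.exp (-c k) * (1 - c k ^ 2 / n)) * (Real.exp (c k) * (1 - c k ^ 2 / m))
        = (1 - c k ^ 2 / n) * (1 - c k ^ 2 / m) := by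
      have h0 : Real.exp (-c k) * Real.exp (c k) = 1 := by rw [← Real.exp_add]; simp
      calc (Real.exp (-c k) * (1 - c k ^ 2 / n)) * (Real.exp (c k) * (1 - c k ^ 2 / m))
          = (Real.exp (-c k) * Real.exp (c k)) * ((1 - c k ^ 2 / n) * (1 - c k ^ 2 / m)) := by
            ring
        _ = (1 - c k ^ 2 / n) * (1 - c k ^ 2 / m) := by rw [h0, one_mul]
    have hprod : 1 - (c k ^ 2 / n + c k ^ 2 / m)
        ≤ (1 - c k ^ 2 / n) * (1 - c k ^ 2 / m) := by
      have h3 : 0 ≤ (c k ^ 2 / n) * (c k ^ 2 / m) := by positivity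
      have h4 : (1 - c k ^ 2 / n) * (1 - c k ^ 2 / m)
          = 1 - c k ^ 2 / n - c k ^ 2 / m + (c k ^ 2 / n) * (c k ^ 2 / m) := by ring
      linarith
    calc 1 - (c k ^ 2 / n + c k ^ 2 / m)
        ≤ (1 - c k ^ 2 / n) * (1 - c k ^ 2 / m) := hprod
      _ = _ := heq.symm
      _ ≤ (1 + x) ^ (l k) * (1 + y) ^ (k - l k) := hmul
      _ = P := by rw [hP, hA, hB]
  -- conclude
  have hbound : c k ^ 2 / n + c k ^ 2 / m ≤ (2 * C ^ 2 / E + 2 * C ^ 2 / (1 - E) + 1) / k := by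
    have h1 : c k ^ 2 / n ≤ C ^ 2 / (k * E / 2) := by
      apply div_le_div₀ (by positivity) hc2 (by positivity) hnhalf
    have h2 : c k ^ 2 / m ≤ C ^ 2 / (k * (1 - E) / 2) := by
      apply div_le_div₀ (by positivity) hc2 (by positivity) hmhalf
    have e1 : C ^ 2 / (k * E / 2) = (2 * C ^ 2 / E) / k := by
      field_simp
    have e2 : C ^ 2 / (k * (1 - E) / 2) = (2 * C ^ 2 / (1 - E)) / k := by
      field_simp
    have h3 : (0:ℝ) ≤ 1 / k := by positivity
    calc c k ^ 2 / n + c k ^ 2 / m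
        ≤ (2 * C ^ 2 / E) / k + (2 * C ^ 2 / (1 - E)) / k := by
          rw [← e1, ← e2]; linarith
      _ ≤ (2 * C ^ 2 / E + 2 * C ^ 2 / (1 - E) + 1) / k := by
          rw [← add_div]
          gcongr ?_ / (k:ℝ)
          linarith
  rw [abs_sub_comm, abs_of_nonneg (by linarith)]
  linarith
end

section
/- Let k be a natural number and let l, m be natural numbers with l ≤ k and m ≤ k. Then the integral over ℂ (with respect to Lebesgue measure) ∫_ℂ ζ^l · conj(ζ)^m / (1 + |ζ|²)^{k+2} dζ equals π·l!·(k−l)!/(k+1)! if l = m, and equals 0 if l ≠ m. -/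
open MeasureTheory

open MeasureTheory Set Filter Real Topology
set_option maxHeartbeats 1000000

lemma fs_integrable (k l : ℕ) (hl : l ≤ k) :
    IntegrableOn (fun r : ℝ => r ^ (2*l+1) / (1 + r^2) ^ (k+2)) (Set.Ioi 0) := by
  have hb : IntegrableOn (fun r : ℝ => r / (1 + r^2)^2) (Set.Ioi 0) := by
    have hD : ∀ x ∈ Set.Ioi (0:ℝ), HasDerivAt (fun r : ℝ => -(2 * (1 + r^2))⁻¹)
        (x / (1 + x^2)^2) x := by
      intro x _
      have h1 : HasDerivAt (fun r : ℝ => 1 + r^2) (2*x) x := by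
        simpa using ((hasDerivAt_pow 2 x).const_add 1)
      have h2 := ((h1.const_mul 2).inv (by positivity)).neg
      refine h2.congr_deriv ?_
      field_simp
    have ht : Tendsto (fun r : ℝ => -(2 * (1 + r^2))⁻¹) atTop (nhds 0) := by
      have t1 : Tendsto (fun r : ℝ => 2 * (1 + r^2)) atTop atTop :=
        (tendsto_atTop_add_const_left _ 1 (tendsto_pow_atTop two_ne_zero)).const_mul_atTop two_pos
      simpa using t1.inv_tendsto_atTop.neg
    have hc : Continuous fun r : ℝ => -(2 * (1 + r^2))⁻¹ :=
      ((continuous_const.mul (by continuity)).inv₀ (fun x => by dsimp only [Pi.mul_apply]; positivity)).neg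
    exact integrableOn_Ioi_deriv_of_nonneg hc.continuousWithinAt hD
      (fun x hx => div_nonneg (le_of_lt hx) (by positivity)) ht
  refine MeasureTheory.Integrable.mono hb ?_ ?_
  · exact ((Continuous.div (by continuity) (by continuity)
      (fun x => by positivity)).aestronglyMeasurable).restrict
  · rw [ae_restrict_iff' measurableSet_Ioi]
    filter_upwards with r hr
    have hr0 : (0:ℝ) < r := hr
    have h1 : (0:ℝ) < 1 + r^2 := by positivity
    rw [Real.norm_eq_abs, Real.norm_eq_abs, abs_of_nonneg (by positivity),
      abs_of_nonneg (by positivity)]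
    calc r ^ (2*l+1) / (1 + r^2) ^ (k+2)
        = r * (r^2)^l / (1 + r^2) ^ (k+2) := by rw [pow_succ, pow_mul]; ring
      _ ≤ r * (1+r^2)^l / (1 + r^2) ^ (k+2) := by
          gcongr
          nlinarith [sq_nonneg r]
      _ = r / (1 + r^2) ^ (k+2-l) := by
          rw [show k+2 = l + (k+2-l) by omega, pow_add]
          field_simp
          ring
          congr 1; omega
      _ ≤ r / (1 + r^2) ^ 2 := by
          gcongr
          · nlinarith [sq_nonneg r]
          · omega

lemma fs_radial (l : ℕ) : ∀ k : ℕ, l ≤ k →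
    ∫ r in Set.Ioi (0:ℝ), r ^ (2*l+1) / (1 + r^2) ^ (k+2)
      = ((Nat.factorial l : ℝ) * (Nat.factorial (k-l) : ℝ)) / (2 * (Nat.factorial (k+1) : ℝ)) := by
  induction l with
  | zero =>
    intro k _
    have hD : ∀ x ∈ Set.Ici (0:ℝ), HasDerivAt
        (fun r : ℝ => -(((1+r^2)^(k+1) : ℝ))⁻¹ / (2*(k+1)))
        (x ^ (2*0+1) / (1+x^2)^(k+2)) x := by
      intro x _
      have h1 : HasDerivAt (fun r : ℝ => 1 + r^2) (2*x) x := by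
        simpa using ((hasDerivAt_pow 2 x).const_add 1)
      have h2 := (((h1.pow (k+1)).inv (by dsimp only [Pi.pow_apply]; positivity)).neg).div_const (2*(k+1))
      refine h2.congr_deriv ?_
      simp only [Pi.pow_apply, Pi.inv_apply, Pi.neg_apply, Nat.add_sub_cancel,
        Nat.cast_add, Nat.cast_one]
      have h3 : (0:ℝ) < 1 + x^2 := by positivity
      field_simp
      ring
    have ht : Tendsto (fun r : ℝ => -(((1+r^2)^(k+1) : ℝ))⁻¹ / (2*(k+1))) atTop (nhds 0) := by
      have t1 : Tendsto (fun r : ℝ => 1 + r^2) atTop atTop :=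
        tendsto_atTop_add_const_left _ 1 (tendsto_pow_atTop two_ne_zero)
      have t2 : Tendsto (fun r : ℝ => ((1+r^2) : ℝ)^(k+1)) atTop atTop :=
        tendsto_atTop_mono (fun r => le_self_pow₀ (by nlinarith [sq_nonneg r]) (Nat.succ_ne_zero k)) t1
      simpa using (t2.inv_tendsto_atTop.neg).div_const (2*((k:ℝ)+1))
    have key := integral_Ioi_of_hasDerivAt_of_tendsto' hD (fs_integrable k 0 (Nat.zero_le k)) ht
    rw [key, Nat.sub_zero, Nat.factorial_zero, Nat.factorial_succ]
    have hk0 : (0:ℝ) < (Nat.factorial k : ℝ) := by exact_mod_cast Nat.factorial_pos k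
    push_cast
    norm_num
    field_simp
  | succ l ih =>
    intro k hk
    obtain ⟨k', rfl⟩ : ∃ k', k = k' + 1 := ⟨k-1, by omega⟩
    have hl' : l ≤ k' := by omega
    have hD : ∀ x ∈ Set.Ici (0:ℝ), HasDerivAt
        (fun r : ℝ => -(r^(2*l+2) * (((1+r^2)^(k'+2) : ℝ))⁻¹) / (2*(k'+2)))
        (x ^ (2*(l+1)+1) / (1+x^2)^((k'+1)+2)
          - ((l:ℝ)+1)/((k':ℝ)+2) * (x ^ (2*l+1) / (1+x^2)^(k'+2))) x := by
      intro x _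
      have h1 : HasDerivAt (fun r : ℝ => 1 + r^2) (2*x) x := by
        simpa using ((hasDerivAt_pow 2 x).const_add 1)
      have h2 := ((h1.pow (k'+2)).inv (by dsimp only [Pi.pow_apply]; positivity))
      have h3 := (hasDerivAt_pow (2*l+2) x)
      have h4 := ((h3.mul h2).neg).div_const (2*(k'+2))
      refine h4.congr_deriv ?_
      have h5 : (0:ℝ) < 1 + x^2 := by positivity
      have e1 : 2*l+2-1 = 2*l+1 := by omega
      rw [e1]
      simp only [Pi.pow_apply, Pi.inv_apply, Pi.mul_apply, Pi.neg_apply,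
        show k'+2-1 = k'+1 from by omega]
      push_cast
      field_simp
      ring
    have ht : Tendsto (fun r : ℝ => -(r^(2*l+2) * (((1+r^2)^(k'+2) : ℝ))⁻¹) / (2*(k'+2)))
        atTop (nhds 0) := by
      have tg : Tendsto (fun r : ℝ => ((1+r^2) : ℝ)⁻¹ / (2*((k':ℝ)+2))) atTop (nhds 0) := by
        have t1 : Tendsto (fun r : ℝ => 1 + r^2) atTop atTop :=
          tendsto_atTop_add_const_left _ 1 (tendsto_pow_atTop two_ne_zero)
        simpa using t1.inv_tendsto_atTop.div_const (2*((k':ℝ)+2))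
      apply squeeze_zero_norm _ tg
      · intro r
        have h5 : (0:ℝ) < 1 + r^2 := by positivity
        have hre : (0:ℝ) ≤ r^(2*l+2) := by
          rw [show 2*l+2 = 2*(l+1) from by omega, pow_mul]; positivity
        rw [Real.norm_eq_abs, abs_div, abs_neg,
          abs_of_nonneg (mul_nonneg hre (by positivity)),
          abs_of_nonneg (by positivity : (0:ℝ) ≤ 2*((k':ℝ)+2))]
        gcongr
        rw [inv_eq_one_div (1+r^2), ← div_eq_mul_inv, div_le_div_iff₀ (by positivity) h5, one_mul]
        calc r^(2*l+2) * (1+r^2) = (r^2)^(l+1) * (1+r^2) := by rw [← pow_mul]; ring_nf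
          _ ≤ (1+r^2)^(l+1) * (1+r^2) := by gcongr; nlinarith [sq_nonneg r]
          _ = (1+r^2)^(l+2) := by ring
          _ ≤ (1+r^2)^(k'+2) := by
              gcongr
              nlinarith [sq_nonneg r]
    have hint : IntegrableOn (fun x : ℝ =>
        x ^ (2*(l+1)+1) / (1+x^2)^((k'+1)+2)
          - ((l:ℝ)+1)/((k':ℝ)+2) * (x ^ (2*l+1) / (1+x^2)^(k'+2))) (Set.Ioi 0) :=
      (fs_integrable (k'+1) (l+1) hk).sub ((fs_integrable k' l hl').const_mul _)
    have key := integral_Ioi_of_hasDerivAt_of_tendsto' hD hint ht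
    have hsub : ∫ x in Set.Ioi (0:ℝ),
        (x ^ (2*(l+1)+1) / (1+x^2)^((k'+1)+2)
          - ((l:ℝ)+1)/((k':ℝ)+2) * (x ^ (2*l+1) / (1+x^2)^(k'+2)))
        = (∫ x in Set.Ioi (0:ℝ), x ^ (2*(l+1)+1) / (1+x^2)^((k'+1)+2))
          - ((l:ℝ)+1)/((k':ℝ)+2) * ∫ x in Set.Ioi (0:ℝ), x ^ (2*l+1) / (1+x^2)^(k'+2) := by
      rw [integral_sub (fs_integrable (k'+1) (l+1) hk) (((fs_integrable k' l hl').const_mul _)),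
        integral_const_mul]
    rw [hsub] at key
    rw [ih k' hl'] at key
    have h0 : (0:ℝ)^(2*l+2) = 0 := zero_pow (by omega)
    rw [h0] at key
    simp only [zero_mul, neg_zero, zero_div, sub_zero] at key
    have : ∫ x in Set.Ioi (0:ℝ), x ^ (2*(l+1)+1) / (1+x^2)^((k'+1)+2)
        = ((l:ℝ)+1)/((k':ℝ)+2) * (((Nat.factorial l : ℝ) * (Nat.factorial (k'-l) : ℝ)) / (2 * (Nat.factorial (k'+1) : ℝ))) := by
      linarith
    rw [this, show k'+1-(l+1) = k'-l from by omega, Nat.factorial_succ (l),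
      Nat.factorial_succ (k'+1)]
    have h1 : (0:ℝ) < (Nat.factorial (k'+1) : ℝ) := by exact_mod_cast Nat.factorial_pos _
    push_cast
    field_simp
    ring

lemma fs_angular_ne (l m : ℕ) (hne : l ≠ m) :
    ∫ θ in Set.Ioo (-π) π, Complex.exp ((((l:ℂ) - m) * Complex.I) * θ) = 0 := by
  set c : ℂ := ((l:ℂ) - m) * Complex.I with hc_def
  have hc : c ≠ 0 := by
    apply mul_ne_zero _ Complex.I_ne_zero
    rw [sub_ne_zero]
    exact_mod_cast hne
  rw [← integral_Ioc_eq_integral_Ioo,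
    ← intervalIntegral.integral_of_le (by linarith [Real.pi_pos] : -π ≤ π),
    integral_exp_mul_complex hc]
  set n : ℤ := (l : ℤ) - m with hn_def
  have h1 : c * π = (n : ℂ) * (π * Complex.I) := by push_cast [hc_def, hn_def]; ring
  have h2 : c * (-π : ℝ) = ((-n : ℤ) : ℂ) * (π * Complex.I) := by
    push_cast [hc_def, hn_def]; ring
  rw [h1, h2, Complex.exp_int_mul, Complex.exp_int_mul, Complex.exp_pi_mul_I]
  rw [zpow_neg, ← inv_zpow, inv_neg, inv_one, sub_self, zero_div]

/-- Orthogonality and normalization of the monomials on `ℂ`: for `l, m ≤ k`,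
`∫_ℂ ζ^l · conj(ζ)^m / (1+|ζ|²)^{k+2} dζ = π·l!·(k−l)!/(k+1)!` if `l = m`, else `0`. -/
theorem integral_monomials_fubini_study (k l m : ℕ) (hl : l ≤ k) (hm : m ≤ k) :
    ∫ ζ : ℂ,
      ζ ^ l * (starRingEnd ℂ ζ) ^ m / ((1 + Complex.normSq ζ : ℝ) : ℂ) ^ (k + 2)
    = if l = m then
        (Real.pi : ℂ) * (Nat.factorial l : ℂ) * (Nat.factorial (k - l) : ℂ) /
          (Nat.factorial (k + 1) : ℂ)
      else 0 := by
  rw [← Complex.integral_comp_polarCoord_symm, polarCoord_target]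
  have hcongr : ∫ p in Set.Ioi (0:ℝ) ×ˢ Set.Ioo (-π) π,
      p.1 • ((Complex.polarCoord.symm p) ^ l * (starRingEnd ℂ (Complex.polarCoord.symm p)) ^ m
        / ((1 + Complex.normSq (Complex.polarCoord.symm p) : ℝ) : ℂ) ^ (k + 2))
    = ∫ p in Set.Ioi (0:ℝ) ×ˢ Set.Ioo (-π) π,
      (fun r : ℝ => ((r ^ (l+m+1) / (1+r^2)^(k+2) : ℝ) : ℂ)) p.1
        * (fun θ : ℝ => Complex.exp ((((l:ℂ) - m) * Complex.I) * θ)) p.2 := by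
    apply setIntegral_congr_fun (measurableSet_Ioi.prod measurableSet_Ioo)
    rintro ⟨r, θ⟩ ⟨hr, hθ⟩
    simp only
    rw [Complex.polarCoord_symm_apply, Complex.ofReal_cos, Complex.ofReal_sin,
      ← Complex.exp_mul_I]
    have hconj : (starRingEnd ℂ) ((r : ℂ) * Complex.exp (θ * Complex.I))
        = (r : ℂ) * Complex.exp (-(θ * Complex.I)) := by
      rw [map_mul, Complex.conj_ofReal, ← Complex.exp_conj, map_mul, Complex.conj_ofReal,
        Complex.conj_I, mul_neg]
    have hns : Complex.normSq ((r : ℂ) * Complex.exp (θ * Complex.I)) = r ^ 2 := by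
      rw [map_mul, Complex.normSq_ofReal, ← Complex.sq_norm (Complex.exp _),
        Complex.norm_exp_ofReal_mul_I]
      ring
    rw [hconj, hns, Complex.real_smul]
    rw [show (((l:ℂ) - m) * Complex.I) * θ = (l : ℂ) * (θ * Complex.I)
        + (m : ℂ) * (-(θ * Complex.I)) from by push_cast; ring,
      Complex.exp_add, Complex.exp_nat_mul, Complex.exp_nat_mul]
    push_cast
    ring
  rw [hcongr, MeasureTheory.Measure.volume_eq_prod,
    MeasureTheory.setIntegral_prod_mul (fun r : ℝ => ((r ^ (l+m+1) / (1+r^2)^(k+2) : ℝ) : ℂ))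
      (fun θ : ℝ => Complex.exp ((((l:ℂ) - m) * Complex.I) * θ))
      (Set.Ioi 0) (Set.Ioo (-π) π)]
  by_cases h : l = m
  · subst h
    have hang : ∫ θ in Set.Ioo (-π) π, Complex.exp ((((l:ℂ) - l) * Complex.I) * θ)
        = ((2 * π : ℝ) : ℂ) := by
      simp only [sub_self, zero_mul, Complex.exp_zero]
      rw [setIntegral_const, Real.volume_real_Ioo_of_le (by linarith [Real.pi_pos]),
        Complex.real_smul]
      push_cast
      ring
    have hrad : (∫ x in Set.Ioi (0:ℝ), ((x ^ (l+l+1) / (1+x^2)^(k+2) : ℝ) : ℂ))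
        = (((Nat.factorial l : ℝ) * (Nat.factorial (k-l) : ℝ) / (2 * (Nat.factorial (k+1) : ℝ)) : ℝ) : ℂ) := by
      rw [show l+l+1 = 2*l+1 from by omega]
      have hcc : (∫ x in Set.Ioi (0:ℝ), ((x ^ (2*l+1) / (1+x^2)^(k+2) : ℝ) : ℂ))
          = ((∫ x in Set.Ioi (0:ℝ), x ^ (2*l+1) / (1+x^2)^(k+2) : ℝ) : ℂ) :=
        Complex.ofRealLI.integral_comp_comm (fun x => x ^ (2*l+1) / (1+x^2)^(k+2))
      rw [hcc, fs_radial l k hl]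
    rw [hrad, hang, if_pos rfl]
    have h1 : (0:ℝ) < (Nat.factorial (k+1) : ℝ) := by exact_mod_cast Nat.factorial_pos _
    have h2 : ((Nat.factorial (k+1) : ℝ) : ℂ) ≠ 0 := by exact_mod_cast h1.ne'
    push_cast
    field_simp
  · rw [fs_angular_ne l m h, mul_zero, if_neg h]
end

section
/- Let E ∈ (0,1) and let l : ℕ → ℕ be a sequence with l(k) ≤ k for all k and such that there exists C > 0 with |l(k) − k·E| ≤ C for all k. Then √( (k+1)/(2π) · C(k, l(k)) · E^{l(k)} · (1−E)^{k−l(k)} ) = k^{1/4} / ( (2π)^{3/4} · (E(1−E))^{1/4} ) + O(k^{−3/4}); that is, there exist C' > 0 and k₀ such that for all k ≥ k₀ the absolute value of the difference is at most C'·k^{−3/4}. -/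
open Stirling Filter Real Topology
set_option maxHeartbeats 1000000

lemma stirling_lower {n : ℕ} (hn : 1 ≤ n) : Real.sqrt π ≤ stirlingSeq n := by
  obtain ⟨m, rfl⟩ := Nat.exists_eq_add_of_le hn
  have h1 : Tendsto (stirlingSeq ∘ Nat.succ) atTop (𝓝 (Real.sqrt π)) :=
    tendsto_stirlingSeq_sqrt_pi.comp (tendsto_add_atTop_nat 1)
  have := Stirling.stirlingSeq'_antitone.le_of_tendsto h1 m
  simpa [Nat.succ_eq_add_one, Nat.add_comm] using this

lemma stirling_upper {n : ℕ} (hn : 2 ≤ n) :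
    Real.log (stirlingSeq n) ≤ Real.log (Real.sqrt π) + 1 / (2 * n) := by
  have key : ∀ m : ℕ, Real.log (stirlingSeq n) - 1 / (4 * ((n : ℝ) - 1)) ≤
      Real.log (stirlingSeq (n + m)) - 1 / (4 * ((n + m : ℝ) - 1)) := by
    intro m
    induction m with
    | zero => simp
    | succ m ih =>
      refine ih.trans ?_
      obtain ⟨j, hj⟩ : ∃ j : ℕ, n + m = j + 1 := ⟨n + m - 1, by omega⟩
      have step := Stirling.log_stirlingSeq_sub_log_stirlingSeq_succ (j + 1)
      have e1 : j + 1 = n + m := hj.symm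
      have e2 : n + m + 1 = n + (m + 1) := by omega
      rw [e1, e2] at step
      have hj2 : ((j : ℝ) + 1) = (n + m : ℝ) := by exact_mod_cast congrArg (Nat.cast (R := ℝ)) e1
      have hpos : (2 : ℝ) ≤ (n : ℝ) + (m : ℝ) := by
        have : (2 : ℕ) ≤ n + m := by omega
        exact_mod_cast this
      push_cast at step hj2
      have h1 : 1 / (4 * ((n : ℝ) + m) ^ 2) ≤
          1 / (4 * ((n : ℝ) + m - 1)) - 1 / (4 * ((n : ℝ) + (m + 1) - 1)) := by
        rw [div_sub_div _ _ (by nlinarith) (by nlinarith), div_le_div_iff₀ (by nlinarith) (by nlinarith)]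
        nlinarith
      push_cast
      linarith
  have hlim : Tendsto (fun m : ℕ => Real.log (stirlingSeq (n + m)) - 1 / (4 * ((n + m : ℝ) - 1)))
      atTop (𝓝 (Real.log (Real.sqrt π) - 0)) := by
    apply Tendsto.sub
    · have hnn : Tendsto (fun m : ℕ => n + m) atTop atTop :=
        (tendsto_add_atTop_nat n).congr fun m => Nat.add_comm m n
      exact ((Real.continuousAt_log (by positivity)).tendsto.comp
        (tendsto_stirlingSeq_sqrt_pi.comp hnn))
    · have h2 : Tendsto (fun m : ℕ => 4 * ((n + m : ℝ) - 1)) atTop atTop := by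
        apply Tendsto.const_mul_atTop (by norm_num : (0:ℝ) < 4)
        apply tendsto_atTop_add_const_right
        exact tendsto_atTop_add_const_left _ _ tendsto_natCast_atTop_atTop
      exact h2.inv_tendsto_atTop.congr fun m => (one_div _).symm
  have := ge_of_tendsto hlim (Filter.Eventually.of_forall key)
  rw [sub_zero] at this
  have hfin : 1 / (4 * ((n : ℝ) - 1)) ≤ 1 / (2 * n) := by
    have h2 : (2 : ℝ) ≤ (n : ℝ) := by exact_mod_cast hn
    apply one_div_le_one_div_of_le (by linarith) (by linarith)
  linarith

lemma log_factorial {n : ℕ} (hn : 1 ≤ n) :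
    Real.log (n.factorial : ℝ) = Real.log (stirlingSeq n) + (1/2) * Real.log (2*n)
      + n * Real.log n - n := by
  obtain ⟨m, rfl⟩ := Nat.exists_eq_add_of_le hn
  have hpos : 0 < stirlingSeq (1 + m) := by rw [Nat.add_comm]; exact Stirling.stirlingSeq'_pos m
  have hn0 : (0:ℝ) < ((1+m : ℕ) : ℝ) := by positivity
  have hd : (0:ℝ) < Real.sqrt (2*((1+m:ℕ):ℝ)) * (((1+m:ℕ):ℝ)/Real.exp 1)^(1+m) := by positivity
  have hfact : ((Nat.factorial (1+m)) : ℝ)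
      = stirlingSeq (1+m) * (Real.sqrt (2*((1+m:ℕ):ℝ)) * (((1+m:ℕ):ℝ)/Real.exp 1)^(1+m)) := by
    rw [stirlingSeq]; field_simp
  rw [hfact, Real.log_mul hpos.ne' hd.ne',
    Real.log_mul (by positivity) (by positivity),
    Real.log_sqrt (by positivity), Real.log_pow,
    Real.log_div hn0.ne' (Real.exp_ne_zero 1), Real.log_exp]
  push_cast
  ring

lemma helper_quad (E C t kk : ℝ) (hE0 : 0 < E) (hE1 : E < 1) (hk : 1 ≤ kk)
    (h1 : -C ≤ t) (h2 : t ≤ C) : |t*kk*(1-2*E) - t^2| ≤ (C+C^2)*kk := by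
  have hk0 : (0:ℝ) < kk := by linarith
  have h_up : t*kk ≤ C*kk := mul_le_mul_of_nonneg_right h2 hk0.le
  have h_lo : -(C*kk) ≤ t*kk := by
    have := mul_le_mul_of_nonneg_right h1 hk0.le; linarith
  have hC0 : 0 ≤ C := by linarith
  have hsq : t^2 ≤ C^2 := sq_le_sq' h1 h2
  have hCk : C^2 ≤ C^2*kk := by nlinarith [sq_nonneg C]
  rw [abs_le]
  constructor
  · nlinarith [mul_nonneg (sub_nonneg.2 h_up) hE0.le,
      mul_nonneg (by linarith : (0:ℝ) ≤ t*kk + C*kk) (by linarith : (0:ℝ) ≤ 1-E),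
      sq_nonneg t]
  · nlinarith [mul_nonneg (sub_nonneg.2 h_up) (by linarith : (0:ℝ) ≤ 1-E),
      mul_nonneg (by linarith : (0:ℝ) ≤ t*kk + C*kk) hE0.le,
      sq_nonneg t]

lemma helper_loglb (X u : ℝ) (hX : 0 ≤ X) (hu2 : 1/2 ≤ u) (h2 : -X ≤ u - 1) :
    -(2*X) ≤ Real.log u := by
  have hu0 : (0:ℝ) < u := by linarith
  have h1 := Real.one_sub_inv_le_log_of_pos hu0
  have h4 : (1 - u⁻¹)*u = u - 1 := by field_simp
  nlinarith [mul_nonneg hX (by linarith : (0:ℝ) ≤ 2*u - 1), hu0]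

lemma helper_exp (d : ℝ) (h0 : 0 < d) (h1 : d ≤ 1) : Real.exp d - 1 ≤ 3*d := by
  have ha := Real.add_one_le_exp (-d)
  have h2 : Real.exp d ≤ Real.exp 1 := Real.exp_le_exp.mpr h1
  have h3 : Real.exp 1 < 2.7182818286 := Real.exp_one_lt_d9
  have h4 : Real.exp (-d) * Real.exp d = 1 := by rw [← Real.exp_add]; simp
  nlinarith [Real.exp_pos d]

/-- Leading asymptotics of the pointwise norm of the monomial section on the level set
`{H = E}`: if `E ∈ (0,1)` and `l(k)` stays within a bounded distance of `k·E`, then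
`√((k+1)/(2π)·C(k,l(k))·E^{l(k)}·(1−E)^{k−l(k)})
  = k^{1/4}/((2π)^{3/4}·(E(1−E))^{1/4}) + O(k^{−3/4})`. -/
theorem monomial_section_norm_on_level_set (E : ℝ) (hE : E ∈ Set.Ioo (0 : ℝ) 1)
    (l : ℕ → ℕ) (hl : ∀ k, l k ≤ k)
    (hbd : ∃ C > 0, ∀ k : ℕ, |(l k : ℝ) - k * E| ≤ C) :
    ∃ C' > 0, ∃ k₀ : ℕ, ∀ k ≥ k₀,
      |Real.sqrt (((k : ℝ) + 1) / (2 * Real.pi) * (Nat.choose k (l k) : ℝ) *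
            E ^ (l k) * (1 - E) ^ (k - l k)) -
          (k : ℝ) ^ ((1 : ℝ) / 4) /
            ((2 * Real.pi) ^ ((3 : ℝ) / 4) * (E * (1 - E)) ^ ((1 : ℝ) / 4))|
        ≤ C' * (k : ℝ) ^ (-(3 : ℝ) / 4) := by
  obtain ⟨hp, hq'⟩ := hE
  have hq : (0:ℝ) < 1 - E := by linarith
  obtain ⟨C, hC, hCb⟩ := hbd
  set c₀ : ℝ := (2 * Real.pi) ^ ((3:ℝ)/4) * (E * (1 - E)) ^ ((1:ℝ)/4) with hc₀
  have hc₀pos : 0 < c₀ := by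
    apply mul_pos <;> exact Real.rpow_pos_of_pos (by positivity) _
  set M : ℝ := 1 + (1/E + 1/(1-E)) + (2*(C+C^2) + C^2)/(E*(1-E)) with hM
  have hMpos : 0 < M := by positivity
  refine ⟨3*M/(2*c₀), by positivity, ?_⟩
  have hev : ∀ᶠ k : ℕ in Filter.atTop,
      |Real.sqrt (((k : ℝ) + 1) / (2 * Real.pi) * (Nat.choose k (l k) : ℝ) *
            E ^ (l k) * (1 - E) ^ (k - l k)) -
          (k : ℝ) ^ ((1 : ℝ) / 4) /
            ((2 * Real.pi) ^ ((3 : ℝ) / 4) * (E * (1 - E)) ^ ((1 : ℝ) / 4))|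
        ≤ 3*M/(2*c₀) * (k : ℝ) ^ (-(3 : ℝ) / 4) := by
    have h1 : ∀ᶠ k : ℕ in atTop, 2*C + 2 ≤ (k:ℝ) * E :=
      (tendsto_natCast_atTop_atTop.atTop_mul_const hp).eventually_ge_atTop _
    have h2 : ∀ᶠ k : ℕ in atTop, 2*C + 2 ≤ (k:ℝ) * (1-E) :=
      (tendsto_natCast_atTop_atTop.atTop_mul_const hq).eventually_ge_atTop _
    have h3 : ∀ᶠ k : ℕ in atTop, (C+C^2)/(E*(1-E)) * 4 ≤ (k:ℝ) :=
      tendsto_natCast_atTop_atTop.eventually_ge_atTop _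
    have h4 : ∀ᶠ k : ℕ in atTop, M ≤ (k:ℝ) :=
      tendsto_natCast_atTop_atTop.eventually_ge_atTop _
    filter_upwards [h1, h2, h3, h4] with k hk1 hk2 hk3 hk4
    -- basic positivity and range facts
    have hk0 : (0:ℝ) < (k:ℝ) := by nlinarith
    have hk1' : (1:ℝ) ≤ (k:ℝ) := by
      have : k ≠ 0 := by rintro rfl; simp at hk1; nlinarith
      exact_mod_cast Nat.one_le_iff_ne_zero.mpr this
    set a : ℝ := (l k : ℝ) with ha
    set bR : ℝ := ((k - l k : ℕ) : ℝ) with hbRdef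
    have hbR : bR = (k:ℝ) - a := by rw [hbRdef, Nat.cast_sub (hl k)]
    have hla := hCb k
    rw [abs_le] at hla
    have halo : (k:ℝ)*E - C ≤ a := by linarith [hla.1]
    have haup : a ≤ (k:ℝ)*E + C := by linarith [hla.2]
    have ha2 : (2:ℝ) ≤ a := by linarith
    have hapos : (0:ℝ) < a := by linarith
    have haE : (k:ℝ)*E/2 ≤ a := by linarith
    have hblo : (k:ℝ)*(1-E) - C ≤ bR := by rw [hbR]; nlinarith
    have hbup : bR ≤ (k:ℝ)*(1-E) + C := by rw [hbR]; nlinarith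
    have hb2 : (2:ℝ) ≤ bR := by linarith
    have hbpos : (0:ℝ) < bR := by linarith
    have hbE : (k:ℝ)*(1-E)/2 ≤ bR := by linarith
    have hl2 : 2 ≤ l k := by
      have h := ha ▸ ha2; exact_mod_cast h
    have hm2 : 2 ≤ k - l k := by
      have h := hbRdef ▸ hb2; exact_mod_cast h
    have hk2 : 2 ≤ k := le_trans hl2 (hl k)
    -- atoms
    set σk := Real.log (stirlingSeq k) with hσk
    set σl := Real.log (stirlingSeq (l k)) with hσl
    set σm := Real.log (stirlingSeq (k - l k)) with hσm
    set Lk := Real.log (k:ℝ) with hLk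
    set La := Real.log a with hLa
    set Lb := Real.log bR with hLb
    set Lp := Real.log E with hLp
    set Lq := Real.log (1-E) with hLq
    -- the sqrt argument
    set S : ℝ := ((k : ℝ) + 1) / (2 * Real.pi) * (Nat.choose k (l k) : ℝ) *
            E ^ (l k) * (1 - E) ^ (k - l k) with hSdef
    have hchoose : (0:ℝ) < (Nat.choose k (l k) : ℝ) := by
      exact_mod_cast Nat.choose_pos (hl k)
    have hSpos : 0 < S := by
      rw [hSdef]
      have h2π : (0:ℝ) < 2 * Real.pi := by positivity
      exact mul_pos (mul_pos (mul_pos (div_pos (by linarith) h2π) hchoose)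
        (pow_pos hp _)) (pow_pos hq _)
    have hchoosed : (Nat.choose k (l k) : ℝ) =
        (Nat.factorial k : ℝ) / ((Nat.factorial (l k) : ℝ) * (Nat.factorial (k - l k) : ℝ)) :=
      Nat.cast_choose ℝ (hl k)
    have hfk := log_factorial (n := k) (by omega)
    have hfl := log_factorial (n := l k) (by omega)
    have hfm := log_factorial (n := k - l k) (by omega)
    have hl2k : Real.log (2*(k:ℝ)) = Real.log 2 + Lk := Real.log_mul two_ne_zero hk0.ne'
    have hl2a : Real.log (2*a) = Real.log 2 + La := Real.log_mul two_ne_zero hapos.ne'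
    have hl2b : Real.log (2*bR) = Real.log 2 + Lb := Real.log_mul two_ne_zero hbpos.ne'
    have hlogS : Real.log S = (Real.log ((k:ℝ)+1) - (Real.log 2 + Real.log π)) +
        ((σk + (1/2)*(Real.log 2 + Lk) + (k:ℝ)*Lk - (k:ℝ))
         - (σl + (1/2)*(Real.log 2 + La) + a*La - a)
         - (σm + (1/2)*(Real.log 2 + Lb) + bR*Lb - bR)) + a*Lp + bR*Lq := by
      rw [hSdef, hchoosed]
      rw [Real.log_mul (by positivity) (pow_pos hq _).ne',
        Real.log_mul (by positivity) (pow_pos hp _).ne',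
        Real.log_mul (by positivity) (by positivity),
        Real.log_div (by positivity) (by positivity),
        Real.log_div (by positivity) (by positivity),
        Real.log_mul (by positivity) (by positivity),
        Real.log_mul (by positivity) (by positivity),
        Real.log_pow, Real.log_pow, hfk, hfl, hfm, hl2k, hl2a, hl2b]
      rw [← ha, ← hbRdef, ← hLa, ← hLb, ← hLp, ← hLq]
      ring
    set T : ℝ := (k : ℝ) ^ ((1 : ℝ) / 4) / c₀ with hT
    have hTpos : 0 < T := div_pos (Real.rpow_pos_of_pos hk0 _) hc₀pos
    have hlogT : Real.log T = (1/4)*Lk - ((3/4)*(Real.log 2 + Real.log π) + (1/4)*(Lp + Lq)) := by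
      rw [hT, Real.log_div (Real.rpow_pos_of_pos hk0 _).ne' hc₀pos.ne', hc₀,
        Real.log_mul (Real.rpow_pos_of_pos (by positivity) _).ne'
          (Real.rpow_pos_of_pos (by positivity) _).ne',
        Real.log_rpow hk0, Real.log_rpow (by positivity), Real.log_rpow (by positivity),
        Real.log_mul two_ne_zero Real.pi_pos.ne', Real.log_mul hp.ne' hq.ne']
    -- part 1 : log(k+1) - log k
    set β : ℝ := 1/(k:ℝ) with hβ
    have hβpos : (0:ℝ) < β := by rw [hβ]; positivity
    have hP1a : 0 ≤ Real.log ((k:ℝ)+1) - Lk := by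
      rw [hLk]
      have := Real.log_le_log hk0 (by linarith : (k:ℝ) ≤ (k:ℝ)+1)
      linarith
    have hP1b : Real.log ((k:ℝ)+1) - Lk ≤ β := by
      rw [hLk]
      have h : Real.log ((k:ℝ)+1) - Real.log (k:ℝ) = Real.log (((k:ℝ)+1)/(k:ℝ)) :=
        (Real.log_div (by linarith) hk0.ne').symm
      have h2 : ((k:ℝ)+1)/(k:ℝ) - 1 = β := by rw [hβ]; field_simp; ring
      have h3 := Real.log_le_sub_one_of_pos (show (0:ℝ) < ((k:ℝ)+1)/(k:ℝ) by positivity)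
      linarith
    -- part 2 : stirling terms
    have hsqpi : Real.log (Real.sqrt π) = Real.log π / 2 := Real.log_sqrt Real.pi_pos.le
    have hσkup : σk ≤ Real.log π / 2 + 1/(2*(k:ℝ)) := by
      have h := stirling_upper hk2; rw [hsqpi] at h; exact h
    have hσklo : Real.log π / 2 ≤ σk := by
      rw [← hsqpi, hσk]
      exact Real.log_le_log (Real.sqrt_pos.mpr Real.pi_pos) (stirling_lower (by omega))
    have hσlup : σl ≤ Real.log π / 2 + 1/(2*a) := by
      have h := stirling_upper hl2; rw [hsqpi] at h; rw [← ha] at h; exact h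
    have hσllo : Real.log π / 2 ≤ σl := by
      rw [← hsqpi, hσl]
      exact Real.log_le_log (Real.sqrt_pos.mpr Real.pi_pos) (stirling_lower (by omega))
    have hσmup : σm ≤ Real.log π / 2 + 1/(2*bR) := by
      have h := stirling_upper hm2; rw [hsqpi] at h; rw [← hbRdef] at h; exact h
    have hσmlo : Real.log π / 2 ≤ σm := by
      rw [← hsqpi, hσm]
      exact Real.log_le_log (Real.sqrt_pos.mpr Real.pi_pos) (stirling_lower (by omega))
    have hinva : 1/(2*a) ≤ (1/E)*β := by
      have h1 : (1/E)*β = 1/((k:ℝ)*E) := by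
        rw [hβ, div_mul_div_comm, one_mul, mul_comm E (k:ℝ)]
      rw [h1]
      exact one_div_le_one_div_of_le (by positivity) (by linarith)
    have hinvb : 1/(2*bR) ≤ (1/(1-E))*β := by
      have h1 : (1/(1-E))*β = 1/((k:ℝ)*(1-E)) := by
        rw [hβ, div_mul_div_comm, one_mul, mul_comm (1-E) (k:ℝ)]
      rw [h1]
      exact one_div_le_one_div_of_le (by positivity) (by linarith)
    have hhalfk : 1/(2*(k:ℝ)) = (1/2)*β := by
      rw [hβ, div_mul_div_comm, one_mul]
    -- part 3 : the ratio u = ab/(k^2 pq)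
    set u : ℝ := a*bR/((k:ℝ)^2*(E*(1-E))) with hu
    have hupos : 0 < u := div_pos (mul_pos hapos hbpos) (by positivity)
    have hlogu : Real.log u = La + Lb - (2*Lk + Lp + Lq) := by
      rw [hu, Real.log_div (mul_pos hapos hbpos).ne' (by positivity),
        Real.log_mul hapos.ne' hbpos.ne',
        Real.log_mul (by positivity : ((k:ℝ)^2 : ℝ) ≠ 0) (by positivity : (E*(1-E)) ≠ 0),
        Real.log_mul hp.ne' hq.ne', Real.log_pow, ← hLa, ← hLb, ← hLk, ← hLp, ← hLq]
      push_cast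
      ring
    have habk : |a*bR - (k:ℝ)^2*(E*(1-E))| ≤ (C+C^2)*(k:ℝ) := by
      have hteq : a*bR - (k:ℝ)^2*(E*(1-E))
          = (a-(k:ℝ)*E)*(k:ℝ)*(1-2*E) - (a-(k:ℝ)*E)^2 := by rw [hbR]; ring
      rw [hteq]
      exact helper_quad E C (a-(k:ℝ)*E) (k:ℝ) hp hq' hk1' (by linarith) (by linarith)
    set X : ℝ := ((C+C^2)/(E*(1-E)))*β with hX
    have hXpos : 0 < X := by rw [hX]; positivity
    have hu1 : |u - 1| ≤ X := by
      have hden : (0:ℝ) < (k:ℝ)^2*(E*(1-E)) := by positivity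
      have h1 : u - 1 = (a*bR - (k:ℝ)^2*(E*(1-E)))/((k:ℝ)^2*(E*(1-E))) := by
        rw [hu, div_sub_one hden.ne']
      rw [h1, abs_div, abs_of_pos hden, div_le_iff₀ hden]
      refine le_trans habk (le_of_eq ?_)
      rw [hX, hβ]; field_simp
    have hXquarter : X ≤ 1/4 := by
      rw [hX, hβ, mul_one_div, div_le_div_iff₀ hk0 (by norm_num)]
      linarith [hk3]
    have huhalf : (1:ℝ)/2 ≤ u := by
      have := abs_le.mp hu1
      linarith
    have hloguup : Real.log u ≤ X := by
      have h1 := Real.log_le_sub_one_of_pos hupos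
      have := abs_le.mp hu1
      linarith
    have hlogulo : -(2*X) ≤ Real.log u := by
      have h2 := abs_le.mp hu1
      exact helper_loglb X u hXpos.le huhalf (by linarith)
    -- part 4 : the entropy term D
    have hvala : Real.log (a/((k:ℝ)*E)) = La - Lk - Lp := by
      rw [Real.log_div hapos.ne' (by positivity), Real.log_mul hk0.ne' hp.ne',
        ← hLa, ← hLk, ← hLp]
      ring
    have hvalb : Real.log (bR/((k:ℝ)*(1-E))) = Lb - Lk - Lq := by
      rw [Real.log_div hbpos.ne' (by positivity), Real.log_mul hk0.ne' hq.ne',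
        ← hLb, ← hLk, ← hLq]
      ring
    set Y : ℝ := (C^2/(E*(1-E)))*β with hY
    have hYpos : 0 < Y := by rw [hY]; positivity
    have hDup : a*(La - Lk - Lp) + bR*(Lb - Lk - Lq) ≤ Y := by
      have h6 : La - Lk - Lp ≤ a/((k:ℝ)*E) - 1 := by
        rw [← hvala]; exact Real.log_le_sub_one_of_pos (div_pos hapos (by positivity))
      have h7 : Lb - Lk - Lq ≤ bR/((k:ℝ)*(1-E)) - 1 := by
        rw [← hvalb]; exact Real.log_le_sub_one_of_pos (div_pos hbpos (by positivity))
      have h8 : a*(La - Lk - Lp) + bR*(Lb - Lk - Lq) ≤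
          a*(a/((k:ℝ)*E) - 1) + bR*(bR/((k:ℝ)*(1-E)) - 1) :=
        add_le_add (mul_le_mul_of_nonneg_left h6 hapos.le)
          (mul_le_mul_of_nonneg_left h7 hbpos.le)
      have h9 : a*(a/((k:ℝ)*E) - 1) + bR*(bR/((k:ℝ)*(1-E)) - 1)
          = (a - (k:ℝ)*E)^2/((k:ℝ)*(E*(1-E))) := by
        rw [hbR]; field_simp; ring
      have h10 : (a - (k:ℝ)*E)^2 ≤ C^2 := sq_le_sq' (by linarith) (by linarith)
      have h11 : (a - (k:ℝ)*E)^2/((k:ℝ)*(E*(1-E))) ≤ C^2/((k:ℝ)*(E*(1-E))) := by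
        gcongr
      have h12 : C^2/((k:ℝ)*(E*(1-E))) = Y := by
        rw [hY, hβ, div_mul_div_comm, mul_one, mul_comm (E*(1-E)) (k:ℝ)]
      linarith
    have hDlo : 0 ≤ a*(La - Lk - Lp) + bR*(Lb - Lk - Lq) := by
      have h6 : 1 - ((k:ℝ)*E)/a ≤ La - Lk - Lp := by
        have h := Real.one_sub_inv_le_log_of_pos
          (show (0:ℝ) < a/((k:ℝ)*E) from div_pos hapos (by positivity))
        rw [hvala, inv_div] at h; exact h
      have h7 : 1 - ((k:ℝ)*(1-E))/bR ≤ Lb - Lk - Lq := by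
        have h := Real.one_sub_inv_le_log_of_pos
          (show (0:ℝ) < bR/((k:ℝ)*(1-E)) from div_pos hbpos (by positivity))
        rw [hvalb, inv_div] at h; exact h
      have h8 : a*(1 - ((k:ℝ)*E)/a) ≤ a*(La - Lk - Lp) :=
        mul_le_mul_of_nonneg_left h6 hapos.le
      have h9 : bR*(1 - ((k:ℝ)*(1-E))/bR) ≤ bR*(Lb - Lk - Lq) :=
        mul_le_mul_of_nonneg_left h7 hbpos.le
      have h10 : a*(1 - ((k:ℝ)*E)/a) = a - (k:ℝ)*E := by field_simp
      have h11 : bR*(1 - ((k:ℝ)*(1-E))/bR) = bR - (k:ℝ)*(1-E) := by field_simp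
      have h12 : (a - (k:ℝ)*E) + (bR - (k:ℝ)*(1-E)) = 0 := by rw [hbR]; ring
      linarith
    -- the main decomposition
    have hΔ : Real.log S - 2*Real.log T = (Real.log ((k:ℝ)+1) - Lk)
        + (σk - σl - σm + Real.log π/2)
        + (-(Real.log u)/2)
        - (a*(La - Lk - Lp) + bR*(Lb - Lk - Lq)) := by
      linear_combination hlogS - 2*hlogT + (1 - Lk)*hbR + (1/2)*hlogu
    have h1E : (1:ℝ) ≤ 1/E := by rw [le_div_iff₀ hp]; linarith
    have hhalfE : (1/2)*β ≤ (1/E)*β := by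
      apply mul_le_mul_of_nonneg_right (by linarith) hβpos.le
    have hbound : |Real.log S - 2*Real.log T| ≤ M*β := by
      have hMexp : M*β = β + ((1/E)*β + (1/(1-E))*β) + (2*X + Y) := by
        rw [hM, hX, hY]; ring
      have hXb : (0:ℝ) ≤ (1/(1-E))*β := by positivity
      rw [hΔ, abs_le]
      constructor
      · linarith [hinva, hinvb, hhalfk, hσkup, hσklo, hσlup, hσllo, hσmup, hσmlo,
          hP1a, hP1b, hloguup, hlogulo, hDup, hDlo, hhalfE, hXpos.le, hYpos.le, hβpos.le, hXb]
      · linarith [hinva, hinvb, hhalfk, hσkup, hσklo, hσlup, hσllo, hσmup, hσmlo,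
          hP1a, hP1b, hloguup, hlogulo, hDup, hDlo, hhalfE, hXpos.le, hYpos.le, hβpos.le, hXb]
    -- conclude
    clear_value M β
    have hδ1 : M*β ≤ 1 := by
      rw [hβ, mul_one_div, div_le_one hk0]; exact hk4
    have hsqrtS : Real.sqrt S = Real.exp (Real.log S / 2) := by
      rw [← Real.log_sqrt hSpos.le, Real.exp_log (Real.sqrt_pos.mpr hSpos)]
    have hTexp : T = Real.exp (Real.log T) := (Real.exp_log hTpos).symm
    set d : ℝ := M*β/2 with hd
    have hdpos : 0 < d := by
      rw [hd]; exact div_pos (mul_pos hMpos hβpos) two_pos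
    have hd1 : d ≤ 1 := by
      rw [hd]; linarith only [hδ1, mul_pos hMpos hβpos]
    have habs := abs_le.mp hbound
    have e1 : Real.exp (Real.log S / 2) ≤ Real.exp (Real.log T) * Real.exp d := by
      rw [← Real.exp_add]
      exact Real.exp_le_exp.mpr (by rw [hd]; linarith only [habs.1, habs.2])
    have e2 : Real.exp (Real.log T) * Real.exp (-d) ≤ Real.exp (Real.log S / 2) := by
      rw [← Real.exp_add]
      exact Real.exp_le_exp.mpr (by rw [hd]; linarith only [habs.1, habs.2])
    have e3 : Real.exp d - 1 ≤ 3*d := helper_exp d hdpos hd1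
    have e4 : 1 - Real.exp (-d) ≤ Real.exp d - 1 := by
      have h1 := Real.add_one_le_exp (-d)
      have h2 := Real.add_one_le_exp d
      linarith
    have hfin : |Real.sqrt S - T| ≤ T * (3*d) := by
      have hq1 : T*(Real.exp d - 1) ≤ T*(3*d) := mul_le_mul_of_nonneg_left e3 hTpos.le
      have hq2 : T*(1 - Real.exp (-d)) ≤ T*(Real.exp d - 1) := mul_le_mul_of_nonneg_left e4 hTpos.le
      have hq3 : Real.exp (Real.log T) * Real.exp d = T*Real.exp d := by rw [Real.exp_log hTpos]
      have hq4 : Real.exp (Real.log T) * Real.exp (-d) = T*Real.exp (-d) := by rw [Real.exp_log hTpos]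
      have hr1 : T*Real.exp d - T = T*(Real.exp d - 1) := by ring
      have hr2 : T - T*Real.exp (-d) = T*(1 - Real.exp (-d)) := by ring
      rw [hsqrtS, abs_le]
      constructor
      · linarith [e2, hq4, hr2, hq2, hq1]
      · linarith [e1, hq3, hr1, hq1]
    have hpow : (k:ℝ)^((1:ℝ)/4) * β = (k:ℝ)^(-(3:ℝ)/4) := by
      rw [show -(3:ℝ)/4 = (1:ℝ)/4 - 1 by norm_num, Real.rpow_sub hk0, Real.rpow_one,
        hβ, mul_one_div]
    refine le_trans hfin (le_of_eq ?_)
    rw [hT, hd, ← hpow]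
    ring
  obtain ⟨k₀, hk₀⟩ := Filter.eventually_atTop.mp hev
  exact ⟨k₀, hk₀⟩
end
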